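/- arXiv:1602.06607 — 4 statements merged into one kernel-verified Lean document; each statement's English description precedes it below -/
import Mathlib

section
/- Let F be a field, let A₀ and A₁ be k×l matrices with entries in F, and let r be a natural number. If there exist r+2 pairwise distinct elements x₁,…,x_{r+2} of F such that rank(A₀ + x_t·A₁) ≤ r for every t = 1,…,r+2, then rank(A₀ + x·A₁) ≤ r for every x ∈ F. -/
open Matrix Polynomial

section Aux

variable {F : Type*} [Field F]

private lemma submatrix_eq_mul_mul' {k l n m : ℕ}
    (A : Matrix (Fin k) (Fin l) F) (f : Fin n → Fin k) (g : Fin m → Fin l) :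
    A.submatrix f g = (1 : Matrix (Fin k) (Fin k) F).submatrix f id * A *
      (1 : Matrix (Fin l) (Fin l) F).submatrix id g := by
  ext i j
  simp [Matrix.mul_apply, Matrix.one_apply, ite_and, Finset.sum_ite_eq, Finset.sum_ite_eq']

private lemma rank_submatrix_le'' {k l n m : ℕ}
    (A : Matrix (Fin k) (Fin l) F) (f : Fin n → Fin k) (g : Fin m → Fin l) :
    (A.submatrix f g).rank ≤ A.rank := by
  rw [submatrix_eq_mul_mul' A f g]
  exact (Matrix.rank_mul_le_left _ _).trans (Matrix.rank_mul_le_right _ _)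

private lemma exists_indep_rows' {k l n : ℕ} (A : Matrix (Fin k) (Fin l) F)
    (h : n ≤ A.rank) : ∃ f : Fin n → Fin k, LinearIndependent F (fun i => A (f i)) := by
  classical
  rw [Matrix.rank_eq_finrank_span_row] at h
  obtain ⟨s, hst, hspan, hli⟩ := exists_linearIndependent F (Set.range A)
  have hfin : s.Finite := (Set.finite_range A).subset hst
  haveI : Fintype s := hfin.fintype
  have hcard : n ≤ Fintype.card s := by
    have h1 := finrank_span_set_eq_card hli
    rw [hspan] at h1
    rw [← Set.toFinset_card, ← h1]
    exact h
  obtain ⟨e⟩ : Nonempty (Fin n ↪ s) :=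
    Function.Embedding.nonempty_iff_card_le.mpr (by simpa using hcard)
  choose f hf using fun i : Fin n => hst (e i).2
  refine ⟨f, ?_⟩
  have h2 : (fun i => A (f i)) = (fun x : s => (x : Fin l → F)) ∘ e := by
    funext i
    simp [Function.comp, hf i]
  rw [h2]
  exact hli.comp e e.injective

private lemma det_submatrix_eq_zero' {k l r : ℕ} {A : Matrix (Fin k) (Fin l) F}
    (h : A.rank ≤ r) (f : Fin (r + 1) → Fin k) (g : Fin (r + 1) → Fin l) :
    (A.submatrix f g).det = 0 := by
  by_contra hd
  have hu : IsUnit (A.submatrix f g) :=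
    (Matrix.isUnit_iff_isUnit_det _).mpr (isUnit_iff_ne_zero.mpr hd)
  have h1 := Matrix.rank_of_isUnit _ hu
  have hle := rank_submatrix_le'' A f g
  rw [h1] at hle
  simp at hle
  omega

private lemma exists_det_ne_zero' {k l r : ℕ} (A : Matrix (Fin k) (Fin l) F)
    (h : ¬ A.rank ≤ r) :
    ∃ (f : Fin (r + 1) → Fin k) (g : Fin (r + 1) → Fin l),
      (A.submatrix f g).det ≠ 0 := by
  push_neg at h
  obtain ⟨f, hf⟩ := exists_indep_rows' A h
  have hf' : LinearIndependent F (fun i => (A.submatrix f id) i) := hf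
  have hBrank : (A.submatrix f id).rank = r + 1 := by
    exact hf'.rank_matrix.trans (Fintype.card_fin _)
  have hT : r + 1 ≤ (A.submatrix f id)ᵀ.rank := by
    rw [Matrix.rank_transpose, hBrank]
  obtain ⟨g, hg⟩ := exists_indep_rows' (A.submatrix f id)ᵀ hT
  refine ⟨f, g, ?_⟩
  have hsq : LinearIndependent F (fun i => ((A.submatrix f g)ᵀ) i) := hg
  have hu : IsUnit ((A.submatrix f g)ᵀ) :=
    Matrix.linearIndependent_rows_iff_isUnit.mp hsq
  have hd : ((A.submatrix f g)ᵀ).det ≠ 0 :=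
    IsUnit.ne_zero ((Matrix.isUnit_iff_isUnit_det _).mp hu)
  rwa [Matrix.det_transpose] at hd

end Aux

/-- If `A₀, A₁` are `k×l` matrices over a field `F` and there are `r+2` pairwise distinct
elements `x t` of `F` with `rank (A₀ + x t • A₁) ≤ r`, then `rank (A₀ + y • A₁) ≤ r`
for every `y ∈ F`. -/
theorem rank_pencil_le_of_distinct {F : Type*} [Field F] {k l : ℕ}
    (A₀ A₁ : Matrix (Fin k) (Fin l) F) (r : ℕ)
    (h : ∃ x : Fin (r + 2) → F, Function.Injective x ∧
      ∀ t : Fin (r + 2), (A₀ + x t • A₁).rank ≤ r) :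
    ∀ y : F, (A₀ + y • A₁).rank ≤ r := by
  obtain ⟨x, hinj, hx⟩ := h
  intro y
  by_contra hy
  obtain ⟨f, g, hd⟩ := exists_det_ne_zero' (A₀ + y • A₁) hy
  set B : Matrix (Fin (r + 1)) (Fin (r + 1)) F[X] :=
    (X : F[X]) • (A₁.submatrix f g).map C + (A₀.submatrix f g).map C with hB
  have hdeg : B.det.natDegree ≤ r + 1 := by
    simpa using Polynomial.natDegree_det_X_add_C_le (A₁.submatrix f g) (A₀.submatrix f g)
  have heval : ∀ c : F, B.det.eval c = ((A₀ + c • A₁).submatrix f g).det := by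
    intro c
    rw [show (Polynomial.eval c : F[X] → F) B.det = (Polynomial.evalRingHom c) B.det from rfl,
      RingHom.map_det]
    congr 1
    ext i j
    simp only [hB, RingHom.mapMatrix_apply, Matrix.map_apply, Matrix.add_apply, Matrix.smul_apply,
      Matrix.submatrix_apply, Polynomial.coe_evalRingHom, Polynomial.eval_add,
      Polynomial.eval_mul, Polynomial.eval_X, Polynomial.eval_C, smul_eq_mul]
    ring
  have hzero : B.det = 0 := by
    refine Polynomial.eq_zero_of_natDegree_lt_card_of_eval_eq_zero B.det hinj
      (fun t => ?_) ?_
    · rw [heval]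
      exact det_submatrix_eq_zero' (hx t) f g
    · simpa using Nat.lt_of_le_of_lt hdeg (by omega)
  have := heval y
  rw [hzero] at this
  simp at this
  exact hd this.symm
end

section
/- Assume nd ≥ 2n+4. For every a ∈ {0,1,…,d−1}^{n/2+1} and every permutation b of {0,1,…,n+1}, the rank of the period matrix [p^{a,b}_{i+j}] equals binom(n/2+d, d) − (n/2+1)². -/
open Finset Matrix

/-- `ζ_{2d} = exp(2πi/(2d))`. -/
noncomputable def zeta2d (d : ℕ) : ℂ :=
  Complex.exp (2 * Real.pi * Complex.I / (2 * (d : ℂ)))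

/-- The even-position index `2e` in `{0,…,n+1}` (with `n = 2h`). -/
def evIdx (h : ℕ) (e : Fin (h + 1)) : Fin (2 * h + 2) :=
  ⟨2 * e.1, by have := e.isLt; omega⟩

/-- The odd-position index `2e+1` in `{0,…,n+1}` (with `n = 2h`). -/
def odIdx (h : ℕ) (e : Fin (h + 1)) : Fin (2 * h + 2) :=
  ⟨2 * e.1 + 1, by have := e.isLt; omega⟩

/-- The index set `I_N`: tuples `(i_0,…,i_{n+1})` with `0 ≤ i_e ≤ d-2` and `∑ i_e = N`,
for `n = 2h` even. -/
abbrev IdxSet (h d N : ℕ) : Type :=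
  {i : Fin (2 * h + 2) → Fin (d - 1) // ∑ e, (i e).1 = N}

/-- The period vector `p^{a,b}` of the linear cycle `ℙ^{n/2}_{a,b}` in the Fermat variety,
extended by zero to all integer tuples. -/
noncomputable def pvec (h d : ℕ) (a : Fin (h + 1) → ℕ) (b : Equiv.Perm (Fin (2 * h + 2)))
    (i : Fin (2 * h + 2) → ℕ) : ℂ :=
  if ∀ e : Fin (h + 1), i (b (evIdx h e)) + i (b (odIdx h e)) = d - 2 then
    zeta2d d ^ (∑ e : Fin (h + 1), (i (b (evIdx h e)) + 1) * (1 + 2 * a e))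
  else 0

/-- The period matrix `[p_{i+j}]` with rows indexed by `I_{(n/2)d-n-2}` and columns by `I_d`. -/
noncomputable def pmat (h d : ℕ) (p : (Fin (2 * h + 2) → ℕ) → ℂ) :
    Matrix (IdxSet h d (h * d - (2 * h + 2))) (IdxSet h d d) ℂ :=
  Matrix.of fun i j => p fun e => (i.1 e).1 + (j.1 e).1

/-- The period vector `P` of the linear cycle with `a = (0,…,0)` and `b = id`. -/
noncomputable def Pvec (h d : ℕ) : (Fin (2 * h + 2) → ℕ) → ℂ :=
  pvec h d (fun _ => 0) (Equiv.refl _)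

/-- The period vector `P̌_m` (with `μ = m+1`): `a` has first `μ` entries `0`, the rest `1`,
and `b = id`. -/
noncomputable def PcheckVec (h d μ : ℕ) : (Fin (2 * h + 2) → ℕ) → ℂ :=
  pvec h d (fun e => if e.1 < μ then 0 else 1) (Equiv.refl _)

/-- The combinatorial constant `C_{α_1,…,α_s}`. -/
def Ccoef (n d : ℕ) {s : ℕ} (α : Fin s → ℕ) : ℤ :=
  ((n + 1 + d).choose (n + 1) : ℤ) -
    ∑ k ∈ Finset.Icc 1 s, (-1 : ℤ) ^ (k - 1) *
      ∑ T ∈ Finset.univ.filter (fun T : Finset (Fin s) => T.card = k ∧ ∑ i ∈ T, α i ≤ d),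
        (((n + 1 + d - ∑ i ∈ T, α i).choose (n + 1) : ℤ))

/-- The sequence `x^s, y^t` (x repeated s times followed by y repeated t times). -/
def twoBlock (x y s t : ℕ) : Fin (s + t) → ℕ := fun i => if i.1 < s then x else y

/-- `K^d_n(m) = 2·C_{1^{n/2+1},(d-1)^{n/2+1}} − C_{1^{n−m+1},(d−1)^{m+1}}`, with `n = 2h`,
`μ = m+1`. -/
def Kdef (h d μ : ℕ) : ℤ :=
  2 * Ccoef (2 * h) d (twoBlock 1 (d - 1) (h + 1) (h + 1)) -
    Ccoef (2 * h) d (twoBlock 1 (d - 1) (2 * h + 2 - μ) μ)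

lemma card_sum_eq (k n : ℕ) : Nat.card {P : Fin k → ℕ // ∑ i, P i = n} = (k + n - 1).choose n := by
  rw [Nat.card_congr (Sym.equivNatSumOfFintype (Fin k) n).symm, Nat.card_eq_fintype_card,
    Sym.card_sym_eq_choose, Fintype.card_fin]

lemma card_adt (k n : ℕ) : (Finset.Nat.antidiagonalTuple k n).card = (k + n - 1).choose n := by
  rw [← Nat.card_eq_finsetCard, Nat.card_congr
    (Equiv.subtypeEquivRight (fun x => Finset.Nat.mem_antidiagonalTuple))]
  exact card_sum_eq k n

lemma sum_update_nat {k : ℕ} (f : Fin k → ℕ) (e : Fin k) (v : ℕ) :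
    ∑ x, Function.update f e v x = v + ∑ x ∈ Finset.univ.erase e, f x := by
  rw [← Finset.add_sum_erase _ _ (Finset.mem_univ e), Function.update_self]
  congr 1
  exact Finset.sum_congr rfl fun x hx =>
    Function.update_of_ne (Finset.ne_of_mem_erase hx) _ _

lemma erase_sum_nat {k : ℕ} (f : Fin k → ℕ) (e : Fin k) :
    ∑ x ∈ Finset.univ.erase e, f x = (∑ x, f x) - f e := by
  have := Finset.add_sum_erase Finset.univ f (Finset.mem_univ e)
  omega

lemma good_card (h d : ℕ) (hd : 3 ≤ d) :
    ((Finset.Nat.antidiagonalTuple (h+1) d).filter (fun c => ∀ e, c e ≤ d - 2)).card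
      + (h+1)*(h+1) = (h + d).choose d := by
  classical
  set S := Finset.Nat.antidiagonalTuple (h+1) d with hS
  clear_value S
  have hmem : ∀ c : Fin (h+1) → ℕ, c ∈ S ↔ ∑ e, c e = d := fun c => by
    rw [hS]; exact Finset.Nat.mem_antidiagonalTuple
  have htot : S.card = (h + d).choose d := by
    rw [hS, card_adt]; congr 1; omega
  have hsplit := Finset.card_filter_add_card_filter_not
    (s := S) (p := fun c => ∀ e, c e ≤ d - 2)
  have hbadeq : S.filter (fun c => ¬ ∀ e, c e ≤ d - 2)
      = Finset.univ.biUnion (fun e : Fin (h+1) => S.filter (fun c => d - 1 ≤ c e)) := by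
    ext c
    simp only [Finset.mem_filter, Finset.mem_biUnion, Finset.mem_univ, true_and, not_forall]
    constructor
    · rintro ⟨hc, e, he⟩; refine ⟨e, hc, ?_⟩; beta_reduce at he ⊢ <;> clear * - he hd <;> omega
    · rintro ⟨e, hc, he⟩; refine ⟨hc, e, ?_⟩; beta_reduce at he ⊢ <;> clear * - he hd <;> omega
  have hbadcard : (S.filter (fun c => ¬ ∀ e, c e ≤ d - 2)).card = (h+1)*(h+1) := by
    rw [hbadeq, Finset.card_biUnion]
    · have hone : ∀ e : Fin (h+1), (S.filter (fun c => d - 1 ≤ c e)).card = h + 1 := by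
        intro e
        have h1 : (Finset.Nat.antidiagonalTuple (h+1) 1).card = h + 1 := by
          rw [card_adt]; simp [Nat.choose_one_right]
        refine (Finset.card_nbij' (i := fun c => Function.update c e (c e - (d-1)))
          (j := fun c => Function.update c e (c e + (d-1))) ?_ ?_ ?_ ?_).trans h1
        · intro c hc
          rw [Finset.mem_coe, Finset.mem_filter, hmem] at hc
          rw [Finset.mem_coe, Finset.Nat.mem_antidiagonalTuple, sum_update_nat, erase_sum_nat]
          beta_reduce at hc ⊢
          obtain ⟨hc1, hc2⟩ := hc
          have hle : c e ≤ ∑ x, c x :=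
            Finset.single_le_sum (fun x _ => Nat.zero_le _) (Finset.mem_univ e)
          clear * - hc1 hc2 hd hle
          omega
        · intro c hc
          rw [Finset.mem_coe, Finset.Nat.mem_antidiagonalTuple] at hc
          rw [Finset.mem_coe, Finset.mem_filter, hmem, sum_update_nat, erase_sum_nat]
          beta_reduce
          rw [Function.update_self]
          have hle : c e ≤ 1 :=
            hc ▸ Finset.single_le_sum (fun x _ => Nat.zero_le _) (Finset.mem_univ e)
          clear * - hc hle hd
          constructor <;> omega
        · intro c hc
          rw [Finset.mem_coe, Finset.mem_filter] at hc
          funext x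
          by_cases hx : x = e
          · subst hx; beta_reduce; simp only [Function.update_self]
            have h2 := hc.2
            beta_reduce at h2
            clear * - h2
            omega
          · beta_reduce; simp [Function.update_of_ne hx]
        · intro c hc
          funext x
          by_cases hx : x = e
          · subst hx; beta_reduce; simp only [Function.update_self]
            clear * -; omega
          · beta_reduce; simp [Function.update_of_ne hx]
      simp only [hone, Finset.sum_const, Finset.card_univ, Fintype.card_fin, smul_eq_mul]
    · intro e _ e' _ hee
      simp only [Finset.disjoint_left, Finset.mem_filter]
      rintro c ⟨hc, he⟩ ⟨hc2, he'⟩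
      rw [hmem] at hc
      beta_reduce at he he'
      have h2 : c e + c e' ≤ ∑ x, c x := by
        have := Finset.add_sum_erase Finset.univ c (Finset.mem_univ e)
        have h3 : c e' ≤ ∑ x ∈ Finset.univ.erase e, c x :=
          Finset.single_le_sum (fun x _ => Nat.zero_le _)
            (Finset.mem_erase.2 ⟨fun hcon => hee hcon.symm, Finset.mem_univ _⟩)
        clear * - this h3
        omega
      clear * - hc h2 hd he he'
      omega
  set G := (S.filter (fun c => ∀ e, c e ≤ d - 2)).card with hG
  set B := (S.filter (fun c => ¬ ∀ e, c e ≤ d - 2)).card with hB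
  set m := (h+1)*(h+1) with hm
  clear_value G B m
  clear * - hsplit hbadcard htot
  omega



def pairEquiv (h : ℕ) : Fin (h + 1) × Fin 2 ≃ Fin (2 * h + 2) :=
  finProdFinEquiv.trans (finCongr (by ring))

lemma pairEquiv_ev (h : ℕ) (e : Fin (h + 1)) : pairEquiv h (e, 0) = evIdx h e := by
  apply Fin.ext
  simp [pairEquiv, finProdFinEquiv, evIdx]

lemma pairEquiv_od (h : ℕ) (e : Fin (h + 1)) : pairEquiv h (e, 1) = odIdx h e := by
  apply Fin.ext
  simp [pairEquiv, finProdFinEquiv, odIdx]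
  omega

lemma sum_pairs {h : ℕ} {M : Type*} [AddCommMonoid M] (g : Fin (2 * h + 2) → M) :
    ∑ x, g x = ∑ e : Fin (h + 1), (g (evIdx h e) + g (odIdx h e)) := by
  rw [← Equiv.sum_comp (pairEquiv h) g, Fintype.sum_prod_type]
  refine Finset.sum_congr rfl fun e _ => ?_
  rw [Fin.sum_univ_two, pairEquiv_ev, pairEquiv_od]

lemma sum_pairs_perm {h : ℕ} {M : Type*} [AddCommMonoid M]
    (b : Equiv.Perm (Fin (2 * h + 2))) (g : Fin (2 * h + 2) → M) :
    ∑ x, g x = ∑ e : Fin (h + 1), (g (b (evIdx h e)) + g (b (odIdx h e))) := by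
  rw [← Equiv.sum_comp b g]
  exact sum_pairs (g ∘ b)

-- block-constant tuples via b
def pairE (h : ℕ) (x : Fin (2 * h + 2)) : Fin (h + 1) := ⟨x.1 / 2, by have := x.isLt; omega⟩

def rowOf (h : ℕ) (b : Equiv.Perm (Fin (2 * h + 2))) (u : Fin (h + 1) → ℕ) :
    Fin (2 * h + 2) → ℕ :=
  fun x => if (b.symm x).1 % 2 = 0 then u (pairE h (b.symm x)) else 0

lemma rowOf_ev {h : ℕ} (b : Equiv.Perm (Fin (2 * h + 2))) (u : Fin (h + 1) → ℕ)
    (e : Fin (h + 1)) : rowOf h b u (b (evIdx h e)) = u e := by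
  have h1 : (evIdx h e).1 % 2 = 0 := by simp [evIdx]
  have h2 : pairE h (evIdx h e) = e := by
    apply Fin.ext; simp only [pairE, evIdx]; omega
  simp [rowOf, Equiv.symm_apply_apply, h1, h2]

lemma rowOf_od {h : ℕ} (b : Equiv.Perm (Fin (2 * h + 2))) (u : Fin (h + 1) → ℕ)
    (e : Fin (h + 1)) : rowOf h b u (b (odIdx h e)) = 0 := by
  simp [rowOf, Equiv.symm_apply_apply, odIdx]

lemma rowOf_le {h d : ℕ} (b : Equiv.Perm (Fin (2 * h + 2))) (u : Fin (h + 1) → ℕ)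
    (hu : ∀ e, u e ≤ d - 2) (x : Fin (2 * h + 2)) : rowOf h b u x ≤ d - 2 := by
  unfold rowOf
  split
  · exact hu _
  · exact Nat.zero_le _

lemma sum_rowOf {h : ℕ} (b : Equiv.Perm (Fin (2 * h + 2))) (u : Fin (h + 1) → ℕ) :
    ∑ x, rowOf h b u x = ∑ e, u e := by
  rw [sum_pairs_perm b]
  simp [rowOf_ev, rowOf_od]


section
variable (h d : ℕ) (a : Fin (h + 1) → ℕ) (b : Equiv.Perm (Fin (2 * h + 2)))

-- W vectors
noncomputable def Wfun (c : Fin (h + 1) → ℕ) : IdxSet h d (h * d - (2 * h + 2)) → ℂ :=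
  fun i =>
    if ∀ e : Fin (h + 1),
        (i.1 (b (evIdx h e))).1 + (i.1 (b (odIdx h e))).1 + c e = d - 2 then
      zeta2d d ^ (∑ e : Fin (h + 1), ((i.1 (b (evIdx h e))).1 + 1) * (1 + 2 * a e))
    else 0

def cfun (j : IdxSet h d d) : Fin (h + 1) → ℕ :=
  fun e => (j.1 (b (evIdx h e))).1 + (j.1 (b (odIdx h e))).1

lemma col_eq (j : IdxSet h d d) :
    (pmat h d (pvec h d a b))ᵀ j
      = (zeta2d d ^ (∑ e : Fin (h + 1), (j.1 (b (evIdx h e))).1 * (1 + 2 * a e)))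
          • Wfun h d a b (cfun h d b j) := by
  funext i
  unfold cfun
  simp only [transpose_apply, pmat, Matrix.of_apply, pvec, Wfun, cfun, Pi.smul_apply,
    smul_eq_mul]
  split_ifs with h1 h2 h2
  · rw [← pow_add]
    congr 1
    rw [← Finset.sum_add_distrib]
    exact Finset.sum_congr rfl fun e _ => by ring
  · exact absurd (fun e => by have := h1 e; omega) h2
  · exact absurd (fun e => by have := h2 e; omega) h1
  · exact (mul_zero _).symm

def mkIdx (u : Fin (h + 1) → ℕ) (hu : ∀ e, u e ≤ d - 2) (hd : 3 ≤ d) (N : ℕ)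
    (hN : ∑ e, u e = N) : IdxSet h d N :=
  ⟨fun x => ⟨rowOf h b u x, by have := rowOf_le b u hu x; omega⟩,
    (show (∑ x, rowOf h b u x) = N from (sum_rowOf b u).trans hN)⟩

@[simp] lemma mkIdx_val (u : Fin (h + 1) → ℕ) (hu : ∀ e, u e ≤ d - 2) (hd : 3 ≤ d) (N : ℕ)
    (hN : ∑ e, u e = N) (x : Fin (2 * h + 2)) :
    ((mkIdx h d b u hu hd N hN).1 x).1 = rowOf h b u x := rfl

end
section
variable {h d : ℕ} {a : Fin (h + 1) → ℕ} {b : Equiv.Perm (Fin (2 * h + 2))}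

lemma zeta2d_ne_zero (d : ℕ) : zeta2d d ≠ 0 := Complex.exp_ne_zero _

lemma rowsum_eq (hd : 3 ≤ d) (hnd : 2 * (2 * h) + 4 ≤ (2 * h) * d)
    (c : Fin (h + 1) → ℕ) (hcsum : ∑ e, c e = d) (hcle : ∀ e, c e ≤ d - 2) :
    ∑ e, (d - 2 - c e) = h * d - (2 * h + 2) := by
  have h4 : (∑ e, (d - 2 - c e)) + (∑ e, c e) = (h + 1) * (d - 2) := by
    rw [← Finset.sum_add_distrib]
    rw [Finset.sum_congr rfl (fun e _ => show d - 2 - c e + c e = d - 2 by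
      have := hcle e; omega)]
    simp [Finset.sum_const, mul_comm]
  have hPQ : (h + 1) * (d - 2) + (2 * h + 2) = h * d + d := by
    obtain ⟨k, rfl⟩ : ∃ k, d = k + 3 := ⟨d - 3, by omega⟩
    have hk : k + 3 - 2 = k + 1 := by omega
    rw [hk]; ring
  have hQ : 2 * (h * d) = (2 * h) * d := by ring
  rw [hcsum] at h4
  omega

lemma Wfun_row_self (hd : 3 ≤ d) (hnd : 2 * (2 * h) + 4 ≤ (2 * h) * d)
    (c : Fin (h + 1) → ℕ) (hcsum : ∑ e, c e = d) (hcle : ∀ e, c e ≤ d - 2) :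
    Wfun h d a b c (mkIdx h d b (fun e => d - 2 - c e)
        (fun e => Nat.sub_le _ _) hd _ (rowsum_eq hd hnd c hcsum hcle)) ≠ 0 := by
  unfold Wfun
  rw [if_pos]
  · exact pow_ne_zero _ (zeta2d_ne_zero d)
  · intro e
    rw [mkIdx_val, mkIdx_val, rowOf_ev, rowOf_od]
    have := hcle e; omega

lemma Wfun_row_other (hd : 3 ≤ d) (hnd : 2 * (2 * h) + 4 ≤ (2 * h) * d)
    (c : Fin (h + 1) → ℕ) (hcsum : ∑ e, c e = d) (hcle : ∀ e, c e ≤ d - 2)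
    (c' : Fin (h + 1) → ℕ) (hne : c' ≠ c) :
    Wfun h d a b c' (mkIdx h d b (fun e => d - 2 - c e)
        (fun e => Nat.sub_le _ _) hd _ (rowsum_eq hd hnd c hcsum hcle)) = 0 := by
  unfold Wfun
  rw [if_neg]
  intro hcon
  apply hne
  funext e
  have h1 := hcon e
  rw [mkIdx_val, mkIdx_val, rowOf_ev, rowOf_od] at h1
  have := hcle e; omega

end


/-- For `nd ≥ 2n+4` (with `n = 2h` even, `n ≥ 2`, `d ≥ 3`), the rank of the period matrix
of any linear cycle `ℙ^{n/2}_{a,b}` equals `binom(n/2+d, d) − (n/2+1)²`. -/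
theorem rank_pmat_linear_cycle (h d : ℕ) (hh : 1 ≤ h) (hd : 3 ≤ d)
    (hnd : 2 * (2 * h) + 4 ≤ (2 * h) * d)
    (a : Fin (h + 1) → Fin d) (b : Equiv.Perm (Fin (2 * h + 2))) :
    ((pmat h d (pvec h d (fun e => (a e : ℕ)) b)).rank : ℤ)
      = ((h + d).choose d : ℤ) - ((h : ℤ) + 1) ^ 2 := by
  classical
  set a' : Fin (h + 1) → ℕ := fun e => (a e : ℕ) with ha'
  set good := (Finset.Nat.antidiagonalTuple (h + 1) d).filter (fun c => ∀ e, c e ≤ d - 2)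
    with hgood
  have hmemgood : ∀ c : Fin (h + 1) → ℕ,
      c ∈ good ↔ (∑ e, c e = d ∧ ∀ e, c e ≤ d - 2) := by
    intro c
    rw [hgood, Finset.mem_filter, Finset.Nat.mem_antidiagonalTuple]
  set Wfam : {x // x ∈ good} → (IdxSet h d (h * d - (2 * h + 2)) → ℂ) :=
    fun c => Wfun h d a' b c.1 with hWfam
  -- linear independence
  have hli : LinearIndependent ℂ Wfam := by
    rw [linearIndependent_iff']
    intro s g hsum0 c hcs
    obtain ⟨hcsum, hcle⟩ := (hmemgood c.1).1 c.2
    set iC := mkIdx h d b (fun e => d - 2 - c.1 e)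
      (fun e => Nat.sub_le _ _) hd _ (rowsum_eq hd hnd c.1 hcsum hcle) with hiC
    have heval := congrFun hsum0 iC
    simp only [Finset.sum_apply, Pi.smul_apply, smul_eq_mul, Pi.zero_apply] at heval
    rw [Finset.sum_eq_single c] at heval
    · have hne := Wfun_row_self (a := a') (b := b) hd hnd c.1 hcsum hcle
      rw [← hiC] at hne
      exact (mul_eq_zero.1 heval).resolve_right hne
    · intro c' _ hne
      have h0 : Wfam c' iC = 0 := by
        rw [hWfam]
        exact Wfun_row_other hd hnd c.1 hcsum hcle c'.1
          (fun hcon => hne (Subtype.ext hcon))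
      rw [h0, mul_zero]
    · intro habs; exact absurd hcs habs
  -- span equality
  set M := pmat h d (pvec h d a' b) with hM
  have hspan : Submodule.span ℂ (Set.range Mᵀ) = Submodule.span ℂ (Set.range Wfam) := by
    apply le_antisymm
    · rw [Submodule.span_le]
      rintro _ ⟨j, rfl⟩
      have hcol := col_eq h d a' b j
      rw [hM, hcol]
      by_cases hadm : ∀ e, cfun h d b j e ≤ d - 2
      · have hsumc : ∑ e, cfun h d b j e = d :=
          (sum_pairs_perm b fun x => (j.1 x).1).symm.trans j.2
        have hmem : cfun h d b j ∈ good := (hmemgood _).2 ⟨hsumc, hadm⟩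
        exact Submodule.smul_mem _ _
          (Submodule.subset_span ⟨⟨cfun h d b j, hmem⟩, rfl⟩)
      · have hW : Wfun h d a' b (cfun h d b j) = 0 := by
          push_neg at hadm
          obtain ⟨e, he⟩ := hadm
          funext i
          unfold Wfun
          rw [if_neg (show ¬ _ from fun hcon => by have h1 := hcon e; omega)]
          rfl
        rw [hW, smul_zero]
        exact Submodule.zero_mem _
    · rw [Submodule.span_le]
      rintro _ ⟨c, rfl⟩
      obtain ⟨hcsum, hcle⟩ := (hmemgood c.1).1 c.2
      set j : IdxSet h d d := mkIdx h d b c.1 hcle hd d hcsum with hj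
      have hcj : cfun h d b j = c.1 := by
        funext e
        show (j.1 (b (evIdx h e))).1 + (j.1 (b (odIdx h e))).1 = c.1 e
        rw [hj, mkIdx_val, mkIdx_val, rowOf_ev, rowOf_od]
        exact Nat.add_zero _
      have hcol := col_eq h d a' b j
      rw [hcj] at hcol
      have hW : Wfam c
          = (zeta2d d ^ (∑ e : Fin (h + 1), (j.1 (b (evIdx h e))).1 * (1 + 2 * a' e)))⁻¹
            • (pmat h d (pvec h d a' b))ᵀ j := by
        rw [hcol, smul_smul, inv_mul_cancel₀ (pow_ne_zero _ (zeta2d_ne_zero d)), one_smul]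
      rw [hW]
      exact Submodule.smul_mem _ _ (Submodule.subset_span ⟨j, rfl⟩)
  -- rank computation
  have hrank : M.rank = good.card := by
    rw [Matrix.rank_eq_finrank_span_cols, show Set.range M.col = Set.range Mᵀ from rfl, hspan, finrank_span_eq_card hli,
      Fintype.card_coe]
  have hgc := good_card h d hd
  rw [← hgood] at hgc
  rw [hM] at hrank
  rw [hrank, ← hgc]
  push_cast
  ring
end

section
/- Let d = 3 and set H_n(m) := rank([P_{i+j}] + [(P̌_m)_{i+j}]). Then: for n = 4, H_4(m) = 1 for m = 2, 1, 0, −1; for n = 6: H_6(3) = 4, H_6(2) = 4, H_6(1) = 6, H_6(0) = 7, H_6(−1) = 8; for n = 8: H_8(4) = 10, H_8(3) = 10, H_8(2) = 16, H_8(1) = 19, H_8(0) = 20, H_8(−1) = 20; for n = 10: H_10(5) = 20, H_10(4) = 20, H_10(3) = 32, H_10(2) = 38, H_10(1) = 40, H_10(0) = 40, H_10(−1) = 40; for n = 12: H_12(6) = 35, H_12(5) = 35, H_12(4) = 55, H_12(3) = 65, H_12(2) = 69, H_12(1) = 70, H_12(0) = 70, H_12(−1) = 70. -/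
open Finset Matrix

/-- `H^d_n(m)`: the rank of `[P_{i+j}] + [(P̌_m)_{i+j}]`, with `n = 2h` and `μ = m+1`. -/
noncomputable def sumRank (h d μ : ℕ) : ℕ :=
  (pmat h d (Pvec h d) + pmat h d (PcheckVec h d μ)).rank


noncomputable def om : ℂ := zeta2d 3

lemma om_prim : IsPrimitiveRoot om 6 := by
  have h := Complex.isPrimitiveRoot_exp 6 (by norm_num)
  have : om = Complex.exp (2 * Real.pi * Complex.I / 6) := by
    unfold om zeta2d; norm_num
  rwa [this]

lemma om_pow_six : om ^ 6 = 1 := om_prim.pow_eq_one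

lemma om_sq : om ^ 2 = om - 1 := by
  have h3 : om ^ 3 = -1 := by
    have : om ^ 3 = Complex.exp (Real.pi * Complex.I) := by
      unfold om zeta2d
      rw [← Complex.exp_nat_mul]
      congr 1
      push_cast
      ring
    rw [this, Complex.exp_pi_mul_I]
  have hne : om + 1 ≠ 0 := by
    intro hc
    have hm : om = -1 := by linear_combination hc
    have h2 : om ^ 2 = 1 := by rw [hm]; norm_num
    exact om_prim.pow_ne_one_of_pos_of_lt (by norm_num) (by norm_num) h2
  have hfac : (om + 1) * (om ^ 2 - om + 1) = 0 := by linear_combination h3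
  rcases mul_eq_zero.mp hfac with h | h
  · exact absurd h hne
  · linear_combination h

lemma om_ne_zero : om ≠ 0 := by
  intro h; have := om_sq; rw [h] at this; norm_num at this

lemma om_ne_one : om ≠ 1 := by
  intro h; have := om_sq; rw [h] at this; norm_num at this

namespace CRT

def pairEquiv (h : ℕ) : Fin (h+1) × Fin 2 ≃ Fin (2*h+2) where
  toFun p := ⟨2*p.1.1 + p.2.1, by have := p.1.isLt; have := p.2.isLt; omega⟩
  invFun x := (⟨x.1/2, by have := x.isLt; omega⟩, ⟨x.1 % 2, by omega⟩)
  left_inv := by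
    rintro ⟨e, b⟩
    have hb := b.isLt
    ext
    · simp; omega
    · simp; omega
  right_inv := by
    rintro x
    ext
    simp
    omega

lemma sum_pairs {h : ℕ} (f : Fin (2*h+2) → ℕ) :
    ∑ x, f x = ∑ e : Fin (h+1), (f (evIdx h e) + f (odIdx h e)) := by
  rw [← Equiv.sum_comp (pairEquiv h) f, Fintype.sum_prod_type]
  refine Finset.sum_congr rfl fun e _ => ?_
  rw [Fin.sum_univ_two]
  rfl

def mk2 {h : ℕ} (g : Fin (h+1) → Fin 2 × Fin 2) : Fin (2*h+2) → Fin 2 :=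
  fun x => if x.1 % 2 = 0 then (g ⟨x.1/2, by have := x.isLt; omega⟩).1
           else (g ⟨x.1/2, by have := x.isLt; omega⟩).2

lemma mk2_ev {h : ℕ} (g : Fin (h+1) → Fin 2 × Fin 2) (e : Fin (h+1)) :
    mk2 g (evIdx h e) = (g e).1 := by
  unfold mk2 evIdx
  have h1 : (⟨2*e.1/2, by have := e.isLt; omega⟩ : Fin (h+1)) = e := by apply Fin.ext; show 2*e.1/2 = e.1; omega
  simp only [if_pos (by omega : 2*e.1 % 2 = 0)]
  rw [show (⟨2*e.1/2, _⟩ : Fin (h+1)) = e from h1]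

lemma mk2_od {h : ℕ} (g : Fin (h+1) → Fin 2 × Fin 2) (e : Fin (h+1)) :
    mk2 g (odIdx h e) = (g e).2 := by
  unfold mk2 odIdx
  have h1 : (⟨(2*e.1+1)/2, by have := e.isLt; omega⟩ : Fin (h+1)) = e := by apply Fin.ext; show (2*e.1+1)/2 = e.1; omega
  simp only [if_neg (by omega : ¬ (2*e.1+1) % 2 = 0)]
  rw [show (⟨(2*e.1+1)/2, _⟩ : Fin (h+1)) = e from h1]

lemma sum_mk2 {h : ℕ} (g : Fin (h+1) → Fin 2 × Fin 2) :
    ∑ x, (mk2 g x).1 = ∑ e : Fin (h+1), ((g e).1.1 + (g e).2.1) := by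
  rw [sum_pairs (fun x => (mk2 g x).1)]
  exact Finset.sum_congr rfl fun e _ => by rw [mk2_ev, mk2_od]

end CRT

lemma om_cube : om ^ 3 = -1 := by
  have : om ^ 3 = Complex.exp (Real.pi * Complex.I) := by
    unfold om zeta2d
    rw [← Complex.exp_nat_mul]
    congr 1
    push_cast
    ring
  rw [this, Complex.exp_pi_mul_I]

lemma one_add_om_ne : (1 : ℂ) + om ≠ 0 := by
  intro hc
  have hm : om = -1 := by linear_combination hc
  have := om_sq
  rw [hm] at this
  norm_num at this

lemma om_pow_two_mul_ne (k : ℕ) : (1 : ℂ) + om ^ (2 * k) ≠ 0 := by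
  have hmod : om ^ (2 * k) = om ^ (2 * (k % 3)) := by
    conv_lhs => rw [show 2 * k = 6 * (k / 3) + 2 * (k % 3) by omega]
    rw [pow_add, pow_mul, om_pow_six, one_pow, one_mul]
  rw [hmod]
  have hk : k % 3 = 0 ∨ k % 3 = 1 ∨ k % 3 = 2 := by omega
  rcases hk with hk | hk | hk <;> rw [hk]
  · norm_num
  · have h1 : (1 : ℂ) + om ^ (2 * 1) = om := by linear_combination om_sq
    rw [h1]; exact om_ne_zero
  · have h1 : (1 : ℂ) + om ^ (2 * 2) = 1 - om := by linear_combination om * om_cube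
    rw [h1]
    intro hc
    exact om_ne_one (by linear_combination -hc)

lemma om_pow_add_neg_one_pow_ne (k : ℕ) : om ^ k + (-1 : ℂ) ^ k ≠ 0 := by
  have hm1 : ((-1 : ℂ)) ^ k = om ^ (3 * k) := by rw [← om_cube, ← pow_mul]
  rw [hm1]
  have hfac : om ^ k + om ^ (3 * k) = om ^ k * (1 + om ^ (2 * k)) := by
    rw [mul_add, mul_one, ← pow_add]
    congr 2
    omega
  rw [hfac]
  exact mul_ne_zero (pow_ne_zero _ om_ne_zero) (om_pow_two_mul_ne k)


namespace CRT

abbrev Rt (h : ℕ) := IdxSet h 3 (h * 3 - (2 * h + 2))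
abbrev Ct (h : ℕ) := IdxSet h 3 3

def pairSum {h : ℕ} (i : Fin (2*h+2) → Fin 2) (e : Fin (h+1)) : ℕ :=
  (i (evIdx h e)).1 + (i (odIdx h e)).1

def evv {h : ℕ} (i : Fin (2*h+2) → Fin 2) (e : Fin (h+1)) : ℕ := (i (evIdx h e)).1

def rowOK {h : ℕ} (T : Finset (Fin (h+1))) (i : Fin (2*h+2) → Fin 2) : Prop :=
  ∀ e, pairSum i e = if e ∈ T then 0 else 1

def colOK {h : ℕ} (T : Finset (Fin (h+1))) (j : Fin (2*h+2) → Fin 2) : Prop :=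
  ∀ e, pairSum j e = if e ∈ T then 1 else 0

instance {h : ℕ} (T : Finset (Fin (h+1))) (i : Fin (2*h+2) → Fin 2) :
    Decidable (rowOK T i) := by unfold rowOK; infer_instance

instance {h : ℕ} (T : Finset (Fin (h+1))) (j : Fin (2*h+2) → Fin 2) :
    Decidable (colOK T j) := by unfold colOK; infer_instance

def hiS (h μ : ℕ) : Finset (Fin (h+1)) := univ.filter (fun e => μ ≤ e.1)

lemma mem_hiS {h μ : ℕ} (e : Fin (h+1)) : e ∈ hiS h μ ↔ μ ≤ e.1 := by
  unfold hiS; simp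

def muP (h μ : ℕ) : ℕ := ((univ : Finset (Fin (h+1))) \ hiS h μ).card
def nuP (h μ : ℕ) : ℕ := (hiS h μ).card

lemma muP_add_nuP (h μ : ℕ) : muP h μ + nuP h μ = h + 1 := by
  unfold muP nuP
  rw [Finset.card_sdiff_add_card_eq_card (Finset.subset_univ _)]
  simp

noncomputable def kap (h μ : ℕ) : ℂ := om ^ (muP h μ) * (-1) ^ (nuP h μ)
noncomputable def lamd (h μ : ℕ) : ℂ := kap h μ * om ^ (5*(h+1))

lemma kap_ne (h μ : ℕ) : kap h μ ≠ 0 :=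
  mul_ne_zero (pow_ne_zero _ om_ne_zero) (pow_ne_zero _ (by norm_num))

noncomputable def UU {h : ℕ} (T : Finset (Fin (h+1))) : Rt h → ℂ :=
  fun i => if rowOK T i.1 then om ^ (∑ e ∈ Tᶜ, evv i.1 e) else 0

noncomputable def UUp {h : ℕ} (μ : ℕ) (T : Finset (Fin (h+1))) : Rt h → ℂ :=
  fun i => if rowOK T i.1 then
    om ^ (∑ e ∈ Tᶜ \ hiS h μ, evv i.1 e) * (-1 : ℂ) ^ (∑ e ∈ Tᶜ ∩ hiS h μ, evv i.1 e)
  else 0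

noncomputable def cA {h : ℕ} (T : Finset (Fin (h+1))) : Ct h → ℂ :=
  fun j => if colOK T j.1 then om ^ ((h+1) + ∑ e ∈ T, evv j.1 e) else 0

noncomputable def cB {h : ℕ} (μ : ℕ) (T : Finset (Fin (h+1))) : Ct h → ℂ :=
  fun j => if colOK T j.1 then
    om ^ (muP h μ + ∑ e ∈ T \ hiS h μ, evv j.1 e) *
      (-1 : ℂ) ^ (nuP h μ + ∑ e ∈ T ∩ hiS h μ, evv j.1 e)
  else 0

def P3 (h : ℕ) : Finset (Finset (Fin (h+1))) := univ.powersetCard 3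

noncomputable def Mtot (h μ : ℕ) : Matrix (Rt h) (Ct h) ℂ :=
  pmat h 3 (Pvec h 3) + pmat h 3 (PcheckVec h 3 μ)

lemma rowOK_unique {h : ℕ} {T T' : Finset (Fin (h+1))} {i : Fin (2*h+2) → Fin 2}
    (h1 : rowOK T i) (h2 : rowOK T' i) : T = T' := by
  ext e
  have a := h1 e
  have b := h2 e
  by_cases he : e ∈ T <;> by_cases he' : e ∈ T' <;> simp [he, he'] at a b ⊢ <;> omega

lemma colOK_unique {h : ℕ} {T T' : Finset (Fin (h+1))} {j : Fin (2*h+2) → Fin 2}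
    (h1 : colOK T j) (h2 : colOK T' j) : T = T' := by
  ext e
  have a := h1 e
  have b := h2 e
  by_cases he : e ∈ T <;> by_cases he' : e ∈ T' <;> simp [he, he'] at a b ⊢ <;> omega

lemma sum_pairSum {h N : ℕ} (i : IdxSet h 3 N) : ∑ e, pairSum i.1 e = N := by
  have hs := sum_pairs (h := h) (fun x => ((i.1 x).1 : ℕ))
  unfold pairSum
  rw [← hs]
  exact i.2

lemma Pvec_apply (h : ℕ) (c : Fin (2*h+2) → ℕ) :
    Pvec h 3 c = if (∀ e : Fin (h+1), c (evIdx h e) + c (odIdx h e) = 1) then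
      om ^ ((h+1) + ∑ e : Fin (h+1), c (evIdx h e)) else 0 := by
  unfold Pvec pvec
  by_cases hq : ∀ e : Fin (h+1), c ((Equiv.refl (Fin (2*h+2))) (evIdx h e))
      + c ((Equiv.refl (Fin (2*h+2))) (odIdx h e)) = 3 - 2
  · rw [if_pos hq, if_pos (by simpa using hq)]
    show zeta2d 3 ^ _ = om ^ _
    rw [show zeta2d 3 = om from rfl]
    congr 1
    have h1 : ∀ e : Fin (h+1), (c ((Equiv.refl (Fin (2*h+2))) (evIdx h e)) + 1) * (1 + 2 * 0)
        = c (evIdx h e) + 1 := fun e => by simp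
    rw [Finset.sum_congr rfl (fun e _ => h1 e), Finset.sum_add_distrib]
    simp [add_comm]
  · rw [if_neg hq, if_neg (by simpa using hq)]

lemma PcheckVec_apply (h μ : ℕ) (c : Fin (2*h+2) → ℕ) :
    PcheckVec h 3 μ c = if (∀ e : Fin (h+1), c (evIdx h e) + c (odIdx h e) = 1) then
      om ^ (∑ e ∈ (univ : Finset (Fin (h+1))) \ hiS h μ, (c (evIdx h e) + 1)) *
        (-1 : ℂ) ^ (∑ e ∈ hiS h μ, (c (evIdx h e) + 1))
    else 0 := by
  unfold PcheckVec pvec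
  by_cases hq : ∀ e : Fin (h+1), c ((Equiv.refl (Fin (2*h+2))) (evIdx h e))
      + c ((Equiv.refl (Fin (2*h+2))) (odIdx h e)) = 3 - 2
  · rw [if_pos hq, if_pos (by simpa using hq)]
    rw [show zeta2d 3 = om from rfl]
    have h2 : (∑ e : Fin (h+1), (c ((Equiv.refl (Fin (2*h+2))) (evIdx h e)) + 1)
          * (1 + 2 * (if (e : Fin (h+1)).1 < μ then 0 else 1)))
        = (∑ e ∈ (univ : Finset (Fin (h+1))) \ hiS h μ, (c (evIdx h e) + 1))
          + 3 * (∑ e ∈ hiS h μ, (c (evIdx h e) + 1)) := by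
      rw [← Finset.sum_inter_add_sum_sdiff univ (hiS h μ)
        (fun e => (c ((Equiv.refl (Fin (2*h+2))) (evIdx h e)) + 1)
          * (1 + 2 * (if (e : Fin (h+1)).1 < μ then 0 else 1))), Finset.univ_inter,
        Finset.mul_sum, add_comm]
      congr 1
      · refine Finset.sum_congr rfl (fun e he => ?_)
        have hnot : e ∉ hiS h μ := (Finset.mem_sdiff.1 he).2
        have : ¬ μ ≤ e.1 := fun hc => hnot ((mem_hiS e).2 hc)
        rw [if_pos (by omega)]
        simp
      · refine Finset.sum_congr rfl (fun e he => ?_)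
        have hm : μ ≤ e.1 := (mem_hiS e).1 he
        rw [if_neg (by omega)]
        simp
        ring
    rw [h2, pow_add, pow_mul, om_cube]
  · rw [if_neg hq, if_neg (by simpa using hq)]

lemma master (h μ : ℕ) (i : Rt h) (j : Ct h) :
    Mtot h μ i j = ∑ T ∈ P3 h, (cA T j * UU T i + cB μ T j * UUp μ T i) := by
  have hM : Mtot h μ i j
      = Pvec h 3 (fun x => ((i.1 x).1 + (j.1 x).1))
        + PcheckVec h 3 μ (fun x => ((i.1 x).1 + (j.1 x).1)) := rfl
  rw [hM, Pvec_apply, PcheckVec_apply]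
  by_cases hq : ∀ e : Fin (h+1),
      ((i.1 (evIdx h e)).1 + (j.1 (evIdx h e)).1) + ((i.1 (odIdx h e)).1 + (j.1 (odIdx h e)).1) = 1
  case neg =>
    rw [if_neg hq, if_neg hq, add_zero]
    symm
    apply Finset.sum_eq_zero
    intro T hT
    by_cases hrow : rowOK T i.1
    · by_cases hcol : colOK T j.1
      · exfalso
        apply hq
        intro e
        have h1 := hrow e
        have h2 := hcol e
        unfold pairSum at h1 h2
        by_cases he : e ∈ T
        · rw [if_pos he] at h1 h2; omega
        · rw [if_neg he] at h1 h2; omega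
      · simp only [cA, cB]
        rw [if_neg hcol, if_neg hcol]
        ring
    · simp only [UU, UUp]
      rw [if_neg hrow, if_neg hrow]
      ring
  case pos =>
    rw [if_pos hq, if_pos hq]
    have hsum1 : ∀ e, pairSum i.1 e + pairSum j.1 e = 1 := fun e => by
      have := hq e; unfold pairSum; omega
    set T0 := univ.filter (fun e => pairSum i.1 e = 0) with hT0def
    have hmemT0 : ∀ e, e ∈ T0 ↔ pairSum i.1 e = 0 := fun e => by
      rw [hT0def]; simp
    have hrow : rowOK T0 i.1 := by
      intro e
      have h1 := hsum1 e
      by_cases h0 : e ∈ T0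
      · rw [if_pos h0]; exact (hmemT0 e).1 h0
      · rw [if_neg h0]
        have hne0 : pairSum i.1 e ≠ 0 := fun hh => h0 ((hmemT0 e).2 hh)
        omega
    have hcol : colOK T0 j.1 := by
      intro e
      have h1 := hsum1 e
      have h2 := hrow e
      by_cases h0 : e ∈ T0 <;> [rw [if_pos h0] at h2 ⊢; rw [if_neg h0] at h2 ⊢] <;> omega
    have hcard : T0.card = 3 := by
      have hsr : ∑ e, pairSum i.1 e = h*3 - (2*h+2) := sum_pairSum i
      have h1 : ∑ e, pairSum i.1 e = ∑ e : Fin (h+1), (if e ∈ T0 then 0 else 1) :=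
        Finset.sum_congr rfl (fun e _ => hrow e)
      have h2 : ∑ e : Fin (h+1), (if e ∈ T0 then 0 else 1)
          = (univ.filter (fun e => ¬ e ∈ T0)).card := by
        rw [Finset.sum_ite, Finset.sum_const, Finset.sum_const]; simp
      have h3 : (univ.filter (fun e => e ∈ T0)).card + (univ.filter (fun e => ¬ e ∈ T0)).card
          = h + 1 := by
        rw [Finset.card_filter_add_card_filter_not]; simp
      have h4 : (univ.filter (fun e => e ∈ T0)).card = T0.card := by
        rw [Finset.filter_univ_mem]
      have hsc : ∑ e, pairSum j.1 e = 3 := sum_pairSum j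
      have h5 : ∑ e, (pairSum i.1 e + pairSum j.1 e) = ∑ e : Fin (h+1), 1 :=
        Finset.sum_congr rfl (fun e _ => hsum1 e)
      rw [Finset.sum_add_distrib] at h5
      simp at h5
      omega
    have hT0P3 : T0 ∈ P3 h := by
      unfold P3
      rw [Finset.mem_powersetCard_univ]
      exact hcard
    rw [Finset.sum_eq_single_of_mem T0 hT0P3 (fun T hT hne => by
      have hnr : ¬ rowOK T i.1 := fun hr => hne (rowOK_unique hr hrow)
      simp only [UU, UUp]
      rw [if_neg hnr, if_neg hnr]
      ring)]
    simp only [cA, cB, UU, UUp]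
    rw [if_pos hcol, if_pos hcol, if_pos hrow, if_pos hrow]
    have hce : ∀ e : Fin (h+1), (i.1 (evIdx h e)).1 + (j.1 (evIdx h e)).1
        = (if e ∈ T0 then evv j.1 e else evv i.1 e) := by
      intro e
      have h1 := hrow e
      have h2 := hcol e
      unfold pairSum at h1 h2
      unfold evv
      by_cases h0 : e ∈ T0 <;> [rw [if_pos h0] at h1 h2 ⊢; rw [if_neg h0] at h1 h2 ⊢] <;> omega
    have hsplit : ∀ s : Finset (Fin (h+1)),
        ∑ e ∈ s, ((i.1 (evIdx h e)).1 + (j.1 (evIdx h e)).1)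
          = ∑ e ∈ s ∩ T0, evv j.1 e + ∑ e ∈ s \ T0, evv i.1 e := by
      intro s
      rw [← Finset.sum_inter_add_sum_sdiff s T0
        (fun e => ((i.1 (evIdx h e)).1 + (j.1 (evIdx h e)).1))]
      congr 1
      · exact Finset.sum_congr rfl (fun e he => by
          rw [hce e, if_pos (Finset.mem_inter.1 he).2])
      · exact Finset.sum_congr rfl (fun e he => by
          rw [hce e, if_neg (Finset.mem_sdiff.1 he).2])
    have hA1 : ((h+1) + ∑ e : Fin (h+1), ((i.1 (evIdx h e)).1 + (j.1 (evIdx h e)).1))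
        = ((h+1) + ∑ e ∈ T0, evv j.1 e) + ∑ e ∈ T0ᶜ, evv i.1 e := by
      rw [hsplit univ, Finset.univ_inter,
        show (univ : Finset (Fin (h+1))) \ T0 = T0ᶜ by ext x; simp]
      ring
    have hA2 : (∑ e ∈ (univ : Finset (Fin (h+1))) \ hiS h μ,
          (((i.1 (evIdx h e)).1 + (j.1 (evIdx h e)).1) + 1))
        = (muP h μ + ∑ e ∈ T0 \ hiS h μ, evv j.1 e)
          + ∑ e ∈ T0ᶜ \ hiS h μ, evv i.1 e := by
      rw [Finset.sum_add_distrib, hsplit ((univ : Finset (Fin (h+1))) \ hiS h μ),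
        show ((univ : Finset (Fin (h+1))) \ hiS h μ) ∩ T0 = T0 \ hiS h μ by ext x; simp; tauto,
        show ((univ : Finset (Fin (h+1))) \ hiS h μ) \ T0 = T0ᶜ \ hiS h μ by ext x; simp; tauto]
      simp only [Finset.sum_const, smul_eq_mul, mul_one]
      unfold muP
      ring
    have hA3 : (∑ e ∈ hiS h μ, (((i.1 (evIdx h e)).1 + (j.1 (evIdx h e)).1) + 1))
        = (nuP h μ + ∑ e ∈ T0 ∩ hiS h μ, evv j.1 e)
          + ∑ e ∈ T0ᶜ ∩ hiS h μ, evv i.1 e := by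
      rw [Finset.sum_add_distrib, hsplit (hiS h μ),
        show hiS h μ ∩ T0 = T0 ∩ hiS h μ from Finset.inter_comm _ _,
        show hiS h μ \ T0 = T0ᶜ ∩ hiS h μ by ext x; simp; tauto]
      simp only [Finset.sum_const, smul_eq_mul, mul_one]
      unfold nuP
      ring
    rw [hA1, hA2, hA3]
    simp only [pow_add]
    ring

end CRT

namespace CRT

lemma cB_eq_lamd (h μ : ℕ) (T : Finset (Fin (h+1))) (hdisj : T ∩ hiS h μ = ∅) (j : Ct h) :
    cB μ T j = lamd h μ * cA T j := by
  simp only [cB, cA]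
  by_cases hcol : colOK T j.1
  · rw [if_pos hcol, if_pos hcol]
    have hd : ∀ x, x ∈ T → x ∉ hiS h μ := fun x hx hh =>
      (Finset.eq_empty_iff_forall_notMem.1 hdisj x) (Finset.mem_inter.2 ⟨hx, hh⟩)
    have h2 : T \ hiS h μ = T := by
      ext x
      simp only [Finset.mem_sdiff]
      exact ⟨fun ⟨a, _⟩ => a, fun hx => ⟨hx, hd x hx⟩⟩
    rw [h2, hdisj]
    simp only [Finset.sum_empty, add_zero]
    unfold lamd kap
    have h6 : om ^ (6*(h+1)) = 1 := by rw [pow_mul, om_pow_six, one_pow]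
    linear_combination (-(-1:ℂ)^(nuP h μ) * om ^ (muP h μ + ∑ e ∈ T, evv j.1 e)) * h6
  · rw [if_neg hcol, if_neg hcol, mul_zero]

lemma UUp_eq_UU (h μ : ℕ) (T : Finset (Fin (h+1))) (hsub : hiS h μ ⊆ T) :
    UUp μ T = UU (h := h) T := by
  funext i
  simp only [UUp, UU]
  by_cases hrow : rowOK T i.1
  · rw [if_pos hrow, if_pos hrow]
    have h1 : Tᶜ ∩ hiS h μ = ∅ := by
      ext x
      simp only [Finset.mem_inter, Finset.mem_compl, Finset.notMem_empty, iff_false]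
      rintro ⟨a, b⟩
      exact a (hsub b)
    have h2 : Tᶜ \ hiS h μ = Tᶜ := by
      ext x
      simp only [Finset.mem_sdiff, Finset.mem_compl]
      exact ⟨fun ⟨a, _⟩ => a, fun hx => ⟨hx, fun hh => hx (hsub hh)⟩⟩
    rw [h1, h2, Finset.sum_empty, pow_zero, mul_one]
  · rw [if_neg hrow, if_neg hrow]

noncomputable def genA (h μ : ℕ) (T : Finset (Fin (h+1))) : Rt h → ℂ :=
  fun i => UU T i + (if T ∩ hiS h μ = ∅ then lamd h μ else 0) * UUp μ T i

noncomputable def Gfun (h μ : ℕ) : (Finset (Fin (h+1)) × Fin 2) → (Rt h → ℂ) :=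
  fun k => if k.2 = 0 then genA h μ k.1 else UUp μ k.1

def r1cond (h μ : ℕ) (T : Finset (Fin (h+1))) : Prop :=
  T ∩ hiS h μ = ∅ ∨ hiS h μ ⊆ T

instance (h μ : ℕ) (T : Finset (Fin (h+1))) : Decidable (r1cond h μ T) := by
  unfold r1cond; infer_instance

def Kfin (h μ : ℕ) : Finset (Finset (Fin (h+1)) × Fin 2) :=
  (P3 h ×ˢ (univ : Finset (Fin 2))).filter (fun k => k.2 = 0 ∨ ¬ r1cond h μ k.1)

lemma mem_Kfin0 (h μ : ℕ) (T : Finset (Fin (h+1))) (hT : T ∈ P3 h) :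
    (T, (0 : Fin 2)) ∈ Kfin h μ := by
  unfold Kfin
  rw [Finset.mem_filter]
  exact ⟨Finset.mem_product.2 ⟨hT, Finset.mem_univ _⟩, Or.inl rfl⟩

lemma mem_Kfin1 (h μ : ℕ) (T : Finset (Fin (h+1))) (hT : T ∈ P3 h) (hr : ¬ r1cond h μ T) :
    (T, (1 : Fin 2)) ∈ Kfin h μ := by
  unfold Kfin
  rw [Finset.mem_filter]
  exact ⟨Finset.mem_product.2 ⟨hT, Finset.mem_univ _⟩, Or.inr hr⟩

lemma col_mem_span (h μ : ℕ) (j : Ct h) :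
    (Mtot h μ)ᵀ j ∈ Submodule.span ℂ (((Kfin h μ).image (Gfun h μ) : Finset (Rt h → ℂ)) :
      Set (Rt h → ℂ)) := by
  have hMj : (Mtot h μ)ᵀ j = ∑ T ∈ P3 h, (cA T j • UU T + cB μ T j • UUp μ T) := by
    funext i
    simp only [Matrix.transpose_apply, Finset.sum_apply, Pi.add_apply, Pi.smul_apply,
      smul_eq_mul]
    exact master h μ i j
  rw [hMj]
  apply Submodule.sum_mem
  intro T hT
  have hmemG0 : Gfun h μ (T, 0) ∈ (((Kfin h μ).image (Gfun h μ) : Finset (Rt h → ℂ)) :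
      Set (Rt h → ℂ)) := by
    simp only [Finset.coe_image, Set.mem_image, Finset.mem_coe]
    exact ⟨(T, 0), mem_Kfin0 h μ T hT, rfl⟩
  by_cases h1 : T ∩ hiS h μ = ∅
  · have hg : Gfun h μ (T, 0) = fun i => UU T i + lamd h μ * UUp μ T i := by
      funext i
      simp only [Gfun, genA, eq_self_iff_true, if_true, if_pos h1]
    have hcomb : cA T j • UU T + cB μ T j • UUp μ T = cA T j • Gfun h μ (T, 0) := by
      funext i
      simp only [hg, Pi.add_apply, Pi.smul_apply, smul_eq_mul]
      rw [cB_eq_lamd h μ T h1 j]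
      ring
    rw [hcomb]
    exact Submodule.smul_mem _ _ (Submodule.subset_span hmemG0)
  · by_cases h2 : hiS h μ ⊆ T
    · have hg : Gfun h μ (T, 0) = UU T := by
        funext i
        simp only [Gfun, genA, eq_self_iff_true, if_true, if_neg h1]
        ring
      have hcomb : cA T j • UU T + cB μ T j • UUp μ T
          = (cA T j + cB μ T j) • Gfun h μ (T, 0) := by
        funext i
        rw [hg, UUp_eq_UU h μ T h2]
        simp only [Pi.add_apply, Pi.smul_apply, smul_eq_mul]
        ring
      rw [hcomb]
      exact Submodule.smul_mem _ _ (Submodule.subset_span hmemG0)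
    · have hr1 : ¬ r1cond h μ T := by
        unfold r1cond
        tauto
      have hmemG1 : Gfun h μ (T, 1) ∈ (((Kfin h μ).image (Gfun h μ) : Finset (Rt h → ℂ)) :
          Set (Rt h → ℂ)) := by
        simp only [Finset.coe_image, Set.mem_image, Finset.mem_coe]
        exact ⟨(T, 1), mem_Kfin1 h μ T hT hr1, rfl⟩
      have hg0 : Gfun h μ (T, 0) = UU T := by
        funext i
        simp only [Gfun, genA, eq_self_iff_true, if_true, if_neg h1]
        ring
      have hg1 : Gfun h μ (T, 1) = UUp μ T := by
        funext i
        simp only [Gfun]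
        rw [if_neg (by decide : ¬ (1 : Fin 2) = 0)]
      rw [show cA T j • UU T + cB μ T j • UUp μ T
          = cA T j • Gfun h μ (T, 0) + cB μ T j • Gfun h μ (T, 1) by rw [hg0, hg1]]
      exact Submodule.add_mem _ (Submodule.smul_mem _ _ (Submodule.subset_span hmemG0))
        (Submodule.smul_mem _ _ (Submodule.subset_span hmemG1))

lemma rank_le (h μ : ℕ) : (Mtot h μ).rank ≤ (Kfin h μ).card := by
  rw [Matrix.rank_eq_finrank_span_cols]
  have h1 : Submodule.span ℂ (Set.range (Mtot h μ).col)
      ≤ Submodule.span ℂ (((Kfin h μ).image (Gfun h μ) : Finset (Rt h → ℂ)) :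
        Set (Rt h → ℂ)) := by
    rw [Submodule.span_le]
    rintro x ⟨j, rfl⟩
    exact col_mem_span h μ j
  have h2 := Submodule.finrank_mono h1
  have h3 := finrank_span_finset_le_card (R := ℂ) ((Kfin h μ).image (Gfun h μ))
  unfold Set.finrank at h3
  have h4 := Finset.card_image_le (s := Kfin h μ) (f := Gfun h μ)
  omega

end CRT

namespace CRT

def jcolF {h : ℕ} (T es : Finset (Fin (h+1))) : Fin (2*h+2) → Fin 2 :=
  mk2 (fun e => if e ∈ T then (if e ∈ es then ((1 : Fin 2), (0 : Fin 2)) else (0, 1)) else (0, 0))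

def irowF {h : ℕ} (T fs : Finset (Fin (h+1))) : Fin (2*h+2) → Fin 2 :=
  mk2 (fun e => if e ∈ T then ((0 : Fin 2), (0 : Fin 2)) else if e ∈ fs then (1, 0) else (0, 1))

lemma indic_sum {h : ℕ} (T : Finset (Fin (h+1))) :
    ∑ e : Fin (h+1), (if e ∈ T then 1 else 0) = T.card := by
  rw [Finset.sum_ite_mem, Finset.univ_inter, Finset.sum_const, smul_eq_mul, mul_one]

def jcolR {h : ℕ} (T es : Finset (Fin (h+1))) (hT3 : T.card = 3) : Ct h :=
  ⟨jcolF T es, by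
    have hs := sum_mk2 (h := h)
      (fun e => if e ∈ T then (if e ∈ es then ((1 : Fin 2), (0 : Fin 2)) else (0, 1)) else (0, 0))
    unfold jcolF
    rw [hs]
    have hc : ∀ e : Fin (h+1),
        (((if e ∈ T then (if e ∈ es then ((1 : Fin 2), (0 : Fin 2)) else (0, 1)) else (0, 0)).1.1 : ℕ)
          + ((if e ∈ T then (if e ∈ es then ((1 : Fin 2), (0 : Fin 2)) else (0, 1)) else (0, 0)).2.1 : ℕ))
        = if e ∈ T then 1 else 0 := by
      intro e
      by_cases he : e ∈ T
      · by_cases he2 : e ∈ es <;> simp [he, he2]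
      · simp [he]
    rw [Finset.sum_congr rfl (fun e _ => hc e), indic_sum, hT3]⟩

def irowR {h : ℕ} (T fs : Finset (Fin (h+1))) (hT3 : T.card = 3) (hh : 2 ≤ h) : Rt h :=
  ⟨irowF T fs, by
    have hs := sum_mk2 (h := h)
      (fun e => if e ∈ T then ((0 : Fin 2), (0 : Fin 2)) else if e ∈ fs then (1, 0) else (0, 1))
    unfold irowF
    rw [hs]
    have hc : ∀ e : Fin (h+1),
        (((if e ∈ T then ((0 : Fin 2), (0 : Fin 2)) else if e ∈ fs then (1, 0) else (0, 1)).1.1 : ℕ)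
          + ((if e ∈ T then ((0 : Fin 2), (0 : Fin 2)) else if e ∈ fs then (1, 0) else (0, 1)).2.1 : ℕ))
        = if e ∈ T then 0 else 1 := by
      intro e
      by_cases he : e ∈ T
      · simp [he]
      · by_cases he2 : e ∈ fs <;> simp [he, he2]
    rw [Finset.sum_congr rfl (fun e _ => hc e)]
    have h1 : ∑ e : Fin (h+1), ((if e ∈ T then 0 else 1) : ℕ)
        + ∑ e : Fin (h+1), ((if e ∈ T then 1 else 0) : ℕ) = h + 1 := by
      rw [← Finset.sum_add_distrib]
      have : ∀ e : Fin (h+1), ((if e ∈ T then 0 else 1) : ℕ) + (if e ∈ T then 1 else 0) = 1 :=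
        fun e => by by_cases he : e ∈ T <;> simp [he]
      rw [Finset.sum_congr rfl (fun e _ => this e)]
      simp
    have h2 := indic_sum T
    omega⟩

lemma irow_rowOK {h : ℕ} (T fs : Finset (Fin (h+1))) : rowOK T (irowF T fs) := by
  intro e
  unfold pairSum irowF
  rw [mk2_ev, mk2_od]
  by_cases he : e ∈ T
  · simp [he]
  · by_cases he2 : e ∈ fs <;> simp [he, he2]

lemma jcol_colOK {h : ℕ} (T es : Finset (Fin (h+1))) : colOK T (jcolF T es) := by
  intro e
  unfold pairSum jcolF
  rw [mk2_ev, mk2_od]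
  by_cases he : e ∈ T
  · by_cases he2 : e ∈ es <;> simp [he, he2]
  · simp [he]

lemma irow_evv {h : ℕ} (T fs : Finset (Fin (h+1))) (e : Fin (h+1)) :
    evv (irowF T fs) e = if e ∉ T ∧ e ∈ fs then 1 else 0 := by
  unfold evv irowF
  rw [mk2_ev]
  by_cases he : e ∈ T
  · simp [he]
  · by_cases he2 : e ∈ fs <;> simp [he, he2]

lemma jcol_evv {h : ℕ} (T es : Finset (Fin (h+1))) (e : Fin (h+1)) :
    evv (jcolF T es) e = if e ∈ T ∧ e ∈ es then 1 else 0 := by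
  unfold evv jcolF
  rw [mk2_ev]
  by_cases he : e ∈ T
  · by_cases he2 : e ∈ es <;> simp [he, he2]
  · simp [he]

lemma sum_evv_irow {h : ℕ} (T fs : Finset (Fin (h+1))) (s : Finset (Fin (h+1)))
    (f : Fin (h+1)) (hfs : fs = {f}) (hfT : f ∉ T) :
    ∑ e ∈ s, evv (irowF T fs) e = if f ∈ s then 1 else 0 := by
  subst hfs
  have hc : ∀ e ∈ s, evv (irowF T {f}) e = if e = f then 1 else 0 := by
    intro e _
    rw [irow_evv]
    by_cases hef : e = f
    · subst hef; simp [hfT]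
    · simp [hef]
  rw [Finset.sum_congr rfl hc, Finset.sum_ite_eq' s f (fun _ => 1)]

lemma sum_evv_irow0 {h : ℕ} (T : Finset (Fin (h+1))) (s : Finset (Fin (h+1))) :
    ∑ e ∈ s, evv (irowF T ∅) e = 0 := by
  apply Finset.sum_eq_zero
  intro e _
  rw [irow_evv]
  simp

lemma sum_evv_jcol {h : ℕ} (T es : Finset (Fin (h+1))) (s : Finset (Fin (h+1)))
    (f : Fin (h+1)) (hes : es = {f}) (hfT : f ∈ T) :
    ∑ e ∈ s, evv (jcolF T es) e = if f ∈ s then 1 else 0 := by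
  subst hes
  have hc : ∀ e ∈ s, evv (jcolF T {f}) e = if e = f then 1 else 0 := by
    intro e _
    rw [jcol_evv]
    by_cases hef : e = f
    · subst hef; simp [hfT]
    · simp [hef]
  rw [Finset.sum_congr rfl hc, Finset.sum_ite_eq' s f (fun _ => 1)]

lemma sum_evv_jcol0 {h : ℕ} (T : Finset (Fin (h+1))) (s : Finset (Fin (h+1))) :
    ∑ e ∈ s, evv (jcolF T ∅) e = 0 := by
  apply Finset.sum_eq_zero
  intro e _
  rw [jcol_evv]
  simp

end CRT

namespace CRT

lemma entry_eval {h : ℕ} (μ : ℕ) (T : Finset (Fin (h+1))) (hT : T ∈ P3 h) (r : Rt h)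
    (hrow : rowOK T r.1) (j : Ct h) :
    Mtot h μ r j = cA T j * UU T r + cB μ T j * UUp μ T r := by
  rw [master]
  exact Finset.sum_eq_single_of_mem T hT (fun T' _ hne => by
    have hnr : ¬ rowOK T' r.1 := fun hr => hne (rowOK_unique hr hrow)
    simp only [UU, UUp]
    rw [if_neg hnr, if_neg hnr]
    ring)

lemma entry_zero {h : ℕ} (μ : ℕ) {T T' : Finset (Fin (h+1))} (hT : T ∈ P3 h) (hne : T ≠ T')
    (r : Rt h) (hrow : rowOK T r.1) (j : Ct h) (hcol : colOK T' j.1) :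
    Mtot h μ r j = 0 := by
  rw [entry_eval μ T hT r hrow j]
  have hca : ¬ colOK T j.1 := fun hc => hne (colOK_unique hc hcol)
  simp only [cA, cB]
  rw [if_neg hca, if_neg hca]
  ring

-- coefficient values
lemma UU_val0 {h : ℕ} (T : Finset (Fin (h+1))) (hT3 : T.card = 3) (hh : 2 ≤ h) :
    UU T (irowR T ∅ hT3 hh) = 1 := by
  simp only [UU]
  rw [if_pos (show rowOK T (irowR T ∅ hT3 hh).1 from irow_rowOK T ∅)]
  simp only [irowR]
  rw [sum_evv_irow0, pow_zero]

lemma UUp_val0 {h μ : ℕ} (T : Finset (Fin (h+1))) (hT3 : T.card = 3) (hh : 2 ≤ h) :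
    UUp μ T (irowR T ∅ hT3 hh) = 1 := by
  simp only [UUp]
  rw [if_pos (show rowOK T (irowR T ∅ hT3 hh).1 from irow_rowOK T ∅)]
  simp only [irowR]
  rw [sum_evv_irow0, sum_evv_irow0, pow_zero, pow_zero, mul_one]

lemma UU_val1 {h : ℕ} (T : Finset (Fin (h+1))) (hT3 : T.card = 3) (hh : 2 ≤ h)
    (f : Fin (h+1)) (hfT : f ∉ T) :
    UU T (irowR T {f} hT3 hh) = om := by
  simp only [UU]
  rw [if_pos (show rowOK T (irowR T {f} hT3 hh).1 from irow_rowOK T {f})]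
  simp only [irowR]
  rw [sum_evv_irow T {f} Tᶜ f rfl hfT,
    if_pos (Finset.mem_compl.2 hfT), pow_one]

lemma UUp_val1 {h μ : ℕ} (T : Finset (Fin (h+1))) (hT3 : T.card = 3) (hh : 2 ≤ h)
    (f : Fin (h+1)) (hfT : f ∉ T) (hfH : f ∈ hiS h μ) :
    UUp μ T (irowR T {f} hT3 hh) = -1 := by
  simp only [UUp]
  rw [if_pos (show rowOK T (irowR T {f} hT3 hh).1 from irow_rowOK T {f})]
  simp only [irowR]
  rw [sum_evv_irow T {f} (Tᶜ \ hiS h μ) f rfl hfT,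
    sum_evv_irow T {f} (Tᶜ ∩ hiS h μ) f rfl hfT,
    if_neg (by simp [Finset.mem_sdiff, hfH]),
    if_pos (Finset.mem_inter.2 ⟨Finset.mem_compl.2 hfT, hfH⟩), pow_zero, pow_one, one_mul]

lemma cA_val0 {h : ℕ} (T : Finset (Fin (h+1))) (hT3 : T.card = 3) :
    cA T (jcolR T ∅ hT3) = om ^ (h+1) := by
  simp only [cA]
  rw [if_pos (show colOK T (jcolR T ∅ hT3).1 from jcol_colOK T ∅)]
  simp only [jcolR]
  rw [sum_evv_jcol0, add_zero]

lemma cB_val0 {h μ : ℕ} (T : Finset (Fin (h+1))) (hT3 : T.card = 3) :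
    cB μ T (jcolR T ∅ hT3) = kap h μ := by
  simp only [cB, kap]
  rw [if_pos (show colOK T (jcolR T ∅ hT3).1 from jcol_colOK T ∅)]
  simp only [jcolR]
  rw [sum_evv_jcol0, sum_evv_jcol0, add_zero, add_zero]

lemma cA_val1 {h : ℕ} (T : Finset (Fin (h+1))) (hT3 : T.card = 3)
    (f : Fin (h+1)) (hfT : f ∈ T) :
    cA T (jcolR T {f} hT3) = om ^ (h+2) := by
  simp only [cA]
  rw [if_pos (show colOK T (jcolR T {f} hT3).1 from jcol_colOK T {f})]
  simp only [jcolR]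
  rw [sum_evv_jcol T {f} T f rfl hfT, if_pos hfT]

lemma cB_val1 {h μ : ℕ} (T : Finset (Fin (h+1))) (hT3 : T.card = 3)
    (f : Fin (h+1)) (hfT : f ∈ T) (hfH : f ∈ hiS h μ) :
    cB μ T (jcolR T {f} hT3) = -(kap h μ) := by
  simp only [cB, kap]
  rw [if_pos (show colOK T (jcolR T {f} hT3).1 from jcol_colOK T {f})]
  simp only [jcolR]
  rw [sum_evv_jcol T {f} (T \ hiS h μ) f rfl hfT,
    sum_evv_jcol T {f} (T ∩ hiS h μ) f rfl hfT,
    if_neg (by simp [Finset.mem_sdiff, hfH]),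
    if_pos (Finset.mem_inter.2 ⟨hfT, hfH⟩), add_zero, pow_add, pow_one]
  ring

lemma a00_ne (h μ : ℕ) : om ^ (h+1) + kap h μ ≠ 0 := by
  have hmn := muP_add_nuP h μ
  unfold kap
  rw [show h + 1 = muP h μ + nuP h μ from hmn.symm, pow_add,
    show om ^ muP h μ * om ^ nuP h μ + om ^ muP h μ * (-1 : ℂ) ^ nuP h μ
      = om ^ muP h μ * (om ^ nuP h μ + (-1) ^ nuP h μ) from by ring]
  exact mul_ne_zero (pow_ne_zero _ om_ne_zero) (om_pow_add_neg_one_pow_ne _)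

end CRT

namespace CRT

def Kty (h μ : ℕ) := {k : Finset (Fin (h+1)) × Fin 2 // k ∈ Kfin h μ}

noncomputable instance (h μ : ℕ) : Fintype (Kty h μ) := by
  unfold Kty; infer_instance

instance (h μ : ℕ) : DecidableEq (Kty h μ) := by
  unfold Kty; infer_instance

lemma fin2_cases (b : Fin 2) : b = 0 ∨ b = 1 := by
  fin_cases b
  · exact Or.inl rfl
  · exact Or.inr rfl

lemma Kty_card (h μ : ℕ) : Fintype.card (Kty h μ) = (Kfin h μ).card := by
  unfold Kty
  exact Fintype.card_coe _

lemma Kfin_P3 {h μ : ℕ} {k : Finset (Fin (h+1)) × Fin 2} (hk : k ∈ Kfin h μ) :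
    k.1 ∈ P3 h :=
  (Finset.mem_product.1 (Finset.mem_filter.1 hk).1).1

lemma P3_card {h : ℕ} {T : Finset (Fin (h+1))} (hT : T ∈ P3 h) : T.card = 3 := by
  unfold P3 at hT
  exact Finset.mem_powersetCard_univ.1 hT

lemma Kfin_or {h μ : ℕ} {k : Finset (Fin (h+1)) × Fin 2} (hk : k ∈ Kfin h μ) :
    k.2 = 0 ∨ ¬ r1cond h μ k.1 :=
  (Finset.mem_filter.1 hk).2

noncomputable def estar (h μ : ℕ) (T : Finset (Fin (h+1))) : Finset (Fin (h+1)) :=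
  if hne : (T ∩ hiS h μ).Nonempty then {hne.choose} else ∅

noncomputable def jsel (h μ : ℕ) (k : Kty h μ) : Ct h :=
  jcolR k.1.1 (if k.1.2 = 0 then ∅ else estar h μ k.1.1) (P3_card (Kfin_P3 k.2))

noncomputable def colsel (h μ : ℕ) (k : Kty h μ) : Rt h → ℂ :=
  (Mtot h μ)ᵀ (jsel h μ k)

lemma jsel_colOK {h μ : ℕ} (k : Kty h μ) : colOK k.1.1 (jsel h μ k).1 :=
  jcol_colOK k.1.1 _

lemma indep (h μ : ℕ) (hh : 2 ≤ h) : LinearIndependent ℂ (colsel h μ) := by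
  rw [Fintype.linearIndependent_iff]
  intro g hg k0
  have hgr : ∀ r : Rt h, ∑ k : Kty h μ, g k * Mtot h μ r (jsel h μ k) = 0 := by
    intro r
    have hcf := congr_fun hg r
    simpa [colsel, Finset.sum_apply, Matrix.transpose_apply] using hcf
  set T := k0.1.1 with hTdef
  have hTP3 : T ∈ P3 h := Kfin_P3 k0.2
  have hT3 : T.card = 3 := P3_card hTP3
  have mem0 : (T, (0 : Fin 2)) ∈ Kfin h μ := mem_Kfin0 h μ T hTP3
  have hred : ∀ (r : Rt h), rowOK T r.1 →
      (∑ k ∈ univ.filter (fun k : Kty h μ => k.1.1 = T), g k * Mtot h μ r (jsel h μ k))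
        = ∑ k : Kty h μ, g k * Mtot h μ r (jsel h μ k) := by
    intro r hr
    apply Finset.sum_filter_of_ne
    intro k _ hgkM
    by_contra hkT
    apply hgkM
    rw [entry_zero μ hTP3 (fun he => hkT he.symm) r hr (jsel h μ k) (jsel_colOK k), mul_zero]
  by_cases hr1 : r1cond h μ T
  · -- rank-one block : only (T,0) present
    set ka : Kty h μ := ⟨(T, 0), mem0⟩ with hka
    have hw0 : ∀ k : Kty h μ, k.1.1 = T → k = ka := by
      intro k hk
      rcases Kfin_or k.2 with hw | hw
      · apply Subtype.ext
        calc k.1 = (k.1.1, k.1.2) := rfl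
          _ = (T, 0) := by rw [hk, hw]
      · rw [hk] at hw; exact absurd hr1 hw
    have hfilter : univ.filter (fun k : Kty h μ => k.1.1 = T) = {ka} := by
      ext k
      simp only [Finset.mem_filter, Finset.mem_univ, true_and, Finset.mem_singleton]
      constructor
      · exact hw0 k
      · rintro rfl; rfl
    have heq := hgr (irowR T ∅ hT3 hh)
    rw [← hred (irowR T ∅ hT3 hh) (irow_rowOK T ∅), hfilter, Finset.sum_singleton] at heq
    have hjs : jsel h μ ka = jcolR T ∅ hT3 := by
      apply Subtype.ext
      simp only [jsel, jcolR, hka, eq_self_iff_true, if_true]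
    rw [hjs, entry_eval μ T hTP3 _ (irow_rowOK T ∅) _, UU_val0 T hT3 hh, UUp_val0 T hT3 hh,
      cA_val0 T hT3, cB_val0 T hT3, mul_one, mul_one] at heq
    have hk0 : k0 = ka := hw0 k0 rfl
    rw [hk0]
    exact (mul_eq_zero.1 heq).resolve_right (a00_ne h μ)
  · -- rank-two block
    have hne1 : ¬ (T ∩ hiS h μ = ∅) := fun hc => hr1 (Or.inl hc)
    have hne2 : ¬ (hiS h μ ⊆ T) := fun hc => hr1 (Or.inr hc)
    have hes : (T ∩ hiS h μ).Nonempty := Finset.nonempty_iff_ne_empty.2 hne1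
    obtain ⟨f, hfH, hfT⟩ := Finset.not_subset.1 hne2
    set E := hes.choose with hEdef
    have hE := hes.choose_spec
    have hET : E ∈ T := (Finset.mem_inter.1 hE).1
    have hEH : E ∈ hiS h μ := (Finset.mem_inter.1 hE).2
    have mem1 : (T, (1 : Fin 2)) ∈ Kfin h μ := mem_Kfin1 h μ T hTP3 hr1
    set ka : Kty h μ := ⟨(T, 0), mem0⟩ with hka
    set kb : Kty h μ := ⟨(T, 1), mem1⟩ with hkb
    have hkanb : ka ≠ kb := by
      intro hc
      have := congr_arg (fun k : Kty h μ => k.1.2) hc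
      simp [hka, hkb] at this
    have hfilter : univ.filter (fun k : Kty h μ => k.1.1 = T) = {ka, kb} := by
      ext k
      simp only [Finset.mem_filter, Finset.mem_univ, true_and, Finset.mem_insert,
        Finset.mem_singleton]
      constructor
      · intro hk
        rcases fin2_cases k.1.2 with hb | hb
        · left
          apply Subtype.ext
          calc k.1 = (k.1.1, k.1.2) := rfl
            _ = (T, 0) := by rw [hk, hb]
        · right
          apply Subtype.ext
          calc k.1 = (k.1.1, k.1.2) := rfl
            _ = (T, 1) := by rw [hk, hb]
      · rintro (rfl | rfl) <;> rfl
    have hjsa : jsel h μ ka = jcolR T ∅ hT3 := by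
      apply Subtype.ext
      simp only [jsel, jcolR, hka, eq_self_iff_true, if_true]
    have hjsb : jsel h μ kb = jcolR T {E} hT3 := by
      apply Subtype.ext
      simp only [jsel, jcolR, hkb]
      rw [if_neg (by decide : ¬ (1 : Fin 2) = 0)]
      unfold estar
      rw [dif_pos hes]
    have heq0 := hgr (irowR T ∅ hT3 hh)
    rw [← hred (irowR T ∅ hT3 hh) (irow_rowOK T ∅), hfilter, Finset.sum_pair hkanb] at heq0
    have heq1 := hgr (irowR T {f} hT3 hh)
    rw [← hred (irowR T {f} hT3 hh) (irow_rowOK T {f}), hfilter, Finset.sum_pair hkanb] at heq1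
    rw [hjsa, hjsb, entry_eval μ T hTP3 _ (irow_rowOK T ∅) _,
      entry_eval μ T hTP3 _ (irow_rowOK T ∅) _,
      UU_val0 T hT3 hh, UUp_val0 T hT3 hh, cA_val0 T hT3, cB_val0 T hT3,
      cA_val1 T hT3 E hET, cB_val1 T hT3 E hET hEH] at heq0
    rw [hjsa, hjsb, entry_eval μ T hTP3 _ (irow_rowOK T {f}) _,
      entry_eval μ T hTP3 _ (irow_rowOK T {f}) _,
      UU_val1 T hT3 hh f hfT, UUp_val1 T hT3 hh f hfT hfH, cA_val0 T hT3, cB_val0 T hT3,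
      cA_val1 T hT3 E hET, cB_val1 T hT3 E hET hEH] at heq1
    have hdet : om ^ (h+1) * kap h μ * (1 + om) ^ 2 ≠ 0 :=
      mul_ne_zero (mul_ne_zero (pow_ne_zero _ om_ne_zero) (kap_ne h μ))
        (pow_ne_zero _ (fun hc => one_add_om_ne hc))
    have hA2 : om ^ (h+2) = om ^ (h+1) * om := by rw [pow_succ]
    have hga : om ^ (h+1) * kap h μ * (1 + om) ^ 2 * g ka = 0 := by
      linear_combination (om ^ (h+1) * om^2 + kap h μ) * heq0
        - (om ^ (h+1) * om - kap h μ) * heq1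
    have hgb : om ^ (h+1) * kap h μ * (1 + om) ^ 2 * g kb = 0 := by
      linear_combination (om ^ (h+1) + kap h μ) * heq1
        - (om ^ (h+1) * om - kap h μ) * heq0
    have hgka : g ka = 0 := (mul_eq_zero.1 hga).resolve_left hdet
    have hgkb : g kb = 0 := (mul_eq_zero.1 hgb).resolve_left hdet
    rcases fin2_cases k0.1.2 with hb | hb
    · have : k0 = ka := by
        apply Subtype.ext
        calc k0.1 = (k0.1.1, k0.1.2) := rfl
          _ = (T, 0) := by rw [← hTdef, hb]
      rw [this]; exact hgka
    · have : k0 = kb := by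
        apply Subtype.ext
        calc k0.1 = (k0.1.1, k0.1.2) := rfl
          _ = (T, 1) := by rw [← hTdef, hb]
      rw [this]; exact hgkb

end CRT

namespace CRT

lemma rank_ge (h μ : ℕ) (hh : 2 ≤ h) : (Kfin h μ).card ≤ (Mtot h μ).rank := by
  rw [Matrix.rank_eq_finrank_span_cols]
  have hind := indep h μ hh
  have h1 : Module.finrank ℂ (Submodule.span ℂ (Set.range (colsel h μ)))
      = Fintype.card (Kty h μ) := finrank_span_eq_card hind
  have h2 : Submodule.span ℂ (Set.range (colsel h μ))
      ≤ Submodule.span ℂ (Set.range (Mtot h μ).col) :=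
    Submodule.span_mono (by rintro x ⟨k, rfl⟩; exact ⟨jsel h μ k, rfl⟩)
  have h3 := Submodule.finrank_mono h2
  rw [h1, Kty_card] at h3
  exact h3

lemma rank_eq (h μ : ℕ) (hh : 2 ≤ h) : (Mtot h μ).rank = (Kfin h μ).card :=
  le_antisymm (rank_le h μ) (rank_ge h μ hh)

end CRT

theorem sumRank_eq (h μ : ℕ) (hh : 2 ≤ h) : sumRank h 3 μ = (CRT.Kfin h μ).card := by
  unfold sumRank
  exact CRT.rank_eq h μ hh

/-- The table of values of `H_n(m) = rank([P_{i+j}] + [(P̌_m)_{i+j}])` for cubic Fermat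
varieties (`d = 3`), with `n = 2h` and `μ = m+1`. -/
theorem cubic_rank_table :
    (∀ μ ≤ 3, sumRank 2 3 μ = 1) ∧
    (sumRank 3 3 4 = 4 ∧ sumRank 3 3 3 = 4 ∧ sumRank 3 3 2 = 6 ∧
      sumRank 3 3 1 = 7 ∧ sumRank 3 3 0 = 8) ∧
    (sumRank 4 3 5 = 10 ∧ sumRank 4 3 4 = 10 ∧ sumRank 4 3 3 = 16 ∧
      sumRank 4 3 2 = 19 ∧ sumRank 4 3 1 = 20 ∧ sumRank 4 3 0 = 20) ∧
    (sumRank 5 3 6 = 20 ∧ sumRank 5 3 5 = 20 ∧ sumRank 5 3 4 = 32 ∧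
      sumRank 5 3 3 = 38 ∧ sumRank 5 3 2 = 40 ∧ sumRank 5 3 1 = 40 ∧ sumRank 5 3 0 = 40) ∧
    (sumRank 6 3 7 = 35 ∧ sumRank 6 3 6 = 35 ∧ sumRank 6 3 5 = 55 ∧
      sumRank 6 3 4 = 65 ∧ sumRank 6 3 3 = 69 ∧ sumRank 6 3 2 = 70 ∧
      sumRank 6 3 1 = 70 ∧ sumRank 6 3 0 = 70) := by
  refine ⟨fun μ hμ => ?_, ⟨?_, ?_, ?_, ?_, ?_⟩, ⟨?_, ?_, ?_, ?_, ?_, ?_⟩,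
    ⟨?_, ?_, ?_, ?_, ?_, ?_, ?_⟩, ⟨?_, ?_, ?_, ?_, ?_, ?_, ?_, ?_⟩⟩
  · interval_cases μ <;> (rw [sumRank_eq 2 _ (by norm_num)]; decide)
  all_goals (rw [sumRank_eq _ _ (by norm_num)]; decide)
end

section
/- For any two pairs of linear-cycle parameters (a,b) and (ǎ,b̌), the complex dimension of L_{a,b} ∩ L_{ǎ,b̌} equals the number of new bicycles attached to ((a,b),(ǎ,b̌)); equivalently, the intersection of the two projective linear subspaces ℙ(L_{a,b}) ∩ ℙ(L_{ǎ,b̌}) ⊆ ℙ^{n+1} is a projective space of dimension (number of new bicycles) − 1. -/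
open Finset Matrix

/-- The linear subspace `L_{a,b} ⊆ ℂ^{n+2}` cut out by the equations
`x_{b_{2e}} − ζ_{2d}^{1+2a_{2e+1}}·x_{b_{2e+1}} = 0` for `e = 0,…,n/2`. -/
noncomputable def Lsub (h d : ℕ) (a : Fin (h + 1) → ℕ) (b : Equiv.Perm (Fin (2 * h + 2))) :
    Submodule ℂ (Fin (2 * h + 2) → ℂ) :=
  ⨅ e : Fin (h + 1), LinearMap.ker
    ((LinearMap.proj (R := ℂ) (φ := fun _ : Fin (2 * h + 2) => ℂ) (b (evIdx h e)))
      - zeta2d d ^ (1 + 2 * a e) •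
        (LinearMap.proj (R := ℂ) (φ := fun _ : Fin (2 * h + 2) => ℂ) (b (odIdx h e))))

/-- Cyclic successor on `Fin (2s+2)`. -/
def cyc (s : ℕ) (t : Fin (2 * s + 2)) : Fin (2 * s + 2) :=
  ⟨(t.1 + 1) % (2 * s + 2), Nat.mod_lt _ (by omega)⟩

/-- `c : Fin (2s+2) → {0,…,n+1}` is a bicycle attached to `(b, b̌)`: its entries are
pairwise distinct, at odd steps (0-indexed even `t`) consecutive entries form a `b`-pair
`{b_{2k}, b_{2k+1}}`, and at even steps (0-indexed odd `t`) a `b̌`-pair. -/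
def IsBicycle (h : ℕ) (b bc : Equiv.Perm (Fin (2 * h + 2))) {s : ℕ}
    (c : Fin (2 * s + 2) → Fin (2 * h + 2)) : Prop :=
  Function.Injective c ∧
  ∀ t : Fin (2 * s + 2),
    if t.1 % 2 = 0 then
      ∃ k : Fin (h + 1),
        ({c t, c (cyc s t)} : Set (Fin (2 * h + 2))) = {b (evIdx h k), b (odIdx h k)}
    else
      ∃ k : Fin (h + 1),
        ({c t, c (cyc s t)} : Set (Fin (2 * h + 2))) = {bc (evIdx h k), bc (odIdx h k)}

/-- The signed contribution of the ordered edge `(u,v)` with respect to `(a,b)`: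
`+(1+2a_{2k+1})` if `(u,v) = (b_{2k}, b_{2k+1})`, `−(1+2a_{2k+1})` if
`(u,v) = (b_{2k+1}, b_{2k})`, and `0` otherwise. -/
def stepSign (h : ℕ) (a : Fin (h + 1) → ℕ) (b : Equiv.Perm (Fin (2 * h + 2)))
    (u v : Fin (2 * h + 2)) : ℤ :=
  ∑ k : Fin (h + 1),
    (if u = b (evIdx h k) ∧ v = b (odIdx h k) then ((1 : ℤ) + 2 * (a k : ℤ))
     else if u = b (odIdx h k) ∧ v = b (evIdx h k) then -((1 : ℤ) + 2 * (a k : ℤ))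
     else 0)

/-- The bicConductor of a bicycle `c` with respect to `((a,b), (ǎ,b̌))`. -/
def bicConductor (h : ℕ) (a ac : Fin (h + 1) → ℕ) (b bc : Equiv.Perm (Fin (2 * h + 2)))
    {s : ℕ} (c : Fin (2 * s + 2) → Fin (2 * h + 2)) : ℤ :=
  ∑ t : Fin (2 * s + 2),
    if t.1 % 2 = 0 then stepSign h a b (c t) (c (cyc s t))
    else stepSign h ac bc (c t) (c (cyc s t))

namespace FermatBic

lemma zeta2d_isPrimitiveRoot (d : ℕ) (hd : d ≠ 0) : IsPrimitiveRoot (zeta2d d) (2 * d) := by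
  have h := Complex.isPrimitiveRoot_exp (2 * d) (by omega)
  have : Complex.exp (2 * Real.pi * Complex.I / ((2 * d : ℕ) : ℂ)) = zeta2d d := by
    rw [zeta2d]; congr 1; push_cast; ring
  rwa [this] at h

lemma zeta2d_ne_zero (d : ℕ) : zeta2d d ≠ 0 := Complex.exp_ne_zero _

def tauFun (h : ℕ) (x : Fin (2 * h + 2)) : Fin (2 * h + 2) :=
  if hx : x.1 % 2 = 0 then ⟨x.1 + 1, by have := x.isLt; omega⟩
  else ⟨x.1 - 1, by have := x.isLt; omega⟩

lemma tauFun_val (h : ℕ) (x : Fin (2 * h + 2)) :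
    (tauFun h x).1 = if x.1 % 2 = 0 then x.1 + 1 else x.1 - 1 := by
  unfold tauFun; split <;> rfl

lemma tauFun_involutive (h : ℕ) : Function.Involutive (tauFun h) := by
  intro x
  apply Fin.ext
  rw [tauFun_val, tauFun_val]
  rcases Nat.even_or_odd x.1 with he | ho
  · have h2 : x.1 % 2 = 0 := Nat.even_iff.mp he
    rw [if_pos h2, if_neg (by omega)]
    omega
  · have h2 : ¬ (x.1 % 2 = 0) := by have := Nat.odd_iff.mp ho; omega
    rw [if_neg h2, if_pos (by omega)]
    omega

def tau (h : ℕ) : Equiv.Perm (Fin (2 * h + 2)) := (tauFun_involutive h).toPerm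

lemma tau_apply (h : ℕ) (x : Fin (2 * h + 2)) : tau h x = tauFun h x := rfl

def pairIdx (h : ℕ) (x : Fin (2 * h + 2)) : Fin (h + 1) := ⟨x.1 / 2, by have := x.isLt; omega⟩

lemma pairIdx_val (h : ℕ) (x : Fin (2 * h + 2)) : (pairIdx h x).1 = x.1 / 2 := rfl

lemma evIdx_val (h : ℕ) (k : Fin (h+1)) : (evIdx h k).1 = 2 * k.1 := rfl
lemma odIdx_val (h : ℕ) (k : Fin (h+1)) : (odIdx h k).1 = 2 * k.1 + 1 := rfl

lemma ev_pairIdx (h : ℕ) (x : Fin (2 * h + 2)) (hx : x.1 % 2 = 0) :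
    evIdx h (pairIdx h x) = x := by
  apply Fin.ext; rw [evIdx_val, pairIdx_val]; omega

lemma od_pairIdx (h : ℕ) (x : Fin (2 * h + 2)) (hx : x.1 % 2 = 1) :
    odIdx h (pairIdx h x) = x := by
  apply Fin.ext; rw [odIdx_val, pairIdx_val]; omega

lemma tau_ev (h : ℕ) (k : Fin (h+1)) : tau h (evIdx h k) = odIdx h k := by
  apply Fin.ext
  rw [tau_apply, tauFun_val, evIdx_val, odIdx_val, if_pos (by omega)]

lemma tau_od (h : ℕ) (k : Fin (h+1)) : tau h (odIdx h k) = evIdx h k := by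
  apply Fin.ext
  rw [tau_apply, tauFun_val, odIdx_val, evIdx_val, if_neg (by omega)]
  omega

lemma tau_ne (h : ℕ) (x : Fin (2 * h + 2)) : tau h x ≠ x := by
  intro hc
  have := congrArg Fin.val hc
  rw [tau_apply, tauFun_val] at this
  rcases Nat.even_or_odd x.1 with he | ho
  · have h2 : x.1 % 2 = 0 := Nat.even_iff.mp he
    rw [if_pos h2] at this; omega
  · have h2 : ¬ (x.1 % 2 = 0) := by have := Nat.odd_iff.mp ho; omega
    rw [if_neg h2] at this; omega

lemma tau_parity (h : ℕ) (x : Fin (2 * h + 2)) :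
    ((tau h x).1 % 2 = 0) ↔ ¬ (x.1 % 2 = 0) := by
  rw [tau_apply, tauFun_val]
  rcases Nat.even_or_odd x.1 with he | ho
  · have h2 : x.1 % 2 = 0 := Nat.even_iff.mp he
    rw [if_pos h2]; constructor <;> intro hh <;> omega
  · have h2 : ¬ (x.1 % 2 = 0) := by have := Nat.odd_iff.mp ho; omega
    rw [if_neg h2]
    refine ⟨fun _ => h2, fun _ => by omega⟩

lemma tau_pairIdx (h : ℕ) (x : Fin (2 * h + 2)) : pairIdx h (tau h x) = pairIdx h x := by
  apply Fin.ext
  rw [pairIdx_val, pairIdx_val, tau_apply, tauFun_val]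
  rcases Nat.even_or_odd x.1 with he | ho
  · have h2 : x.1 % 2 = 0 := Nat.even_iff.mp he
    rw [if_pos h2]; omega
  · have h2 : ¬ (x.1 % 2 = 0) := by have := Nat.odd_iff.mp ho; omega
    rw [if_neg h2]; omega

section OneMatching

variable (h : ℕ) (a : Fin (h + 1) → ℕ) (b : Equiv.Perm (Fin (2 * h + 2)))

def iota : Equiv.Perm (Fin (2 * h + 2)) := (b.symm.trans (tau h)).trans b

lemma iota_apply (v : Fin (2 * h + 2)) : iota h b v = b (tau h (b.symm v)) := rfl

lemma iota_iota (v : Fin (2 * h + 2)) : iota h b (iota h b v) = v := by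
  simp [iota_apply, tau_apply, tauFun_involutive h (b.symm v)]

lemma iota_ne (v : Fin (2 * h + 2)) : iota h b v ≠ v := by
  rw [iota_apply]
  intro hc
  exact tau_ne h (b.symm v) (by simpa using congrArg b.symm hc)

def wfun (v : Fin (2 * h + 2)) : ℤ :=
  (if (b.symm v).1 % 2 = 0 then 1 else -1) * (1 + 2 * (a (pairIdx h (b.symm v)) : ℤ))

lemma wfun_iota (v : Fin (2 * h + 2)) : wfun h a b (iota h b v) = - wfun h a b v := by
  have hs : b.symm (iota h b v) = tau h (b.symm v) := by simp [iota_apply]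
  rw [wfun, hs, tau_pairIdx, wfun]
  by_cases hc : (b.symm v).1 % 2 = 0
  · rw [if_neg (by rw [tau_parity]; exact fun hk => hk hc), if_pos hc]; ring
  · rw [if_pos ((tau_parity h _).mpr hc), if_neg hc]; ring

lemma pair_ex (v : Fin (2 * h + 2)) :
    ∃ k : Fin (h + 1), ({v, iota h b v} : Set (Fin (2 * h + 2)))
      = {b (evIdx h k), b (odIdx h k)} := by
  refine ⟨pairIdx h (b.symm v), ?_⟩
  by_cases hc : (b.symm v).1 % 2 = 0
  · have h1 : b (evIdx h (pairIdx h (b.symm v))) = v := by rw [ev_pairIdx h _ hc]; simp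
    have h2 : b (odIdx h (pairIdx h (b.symm v))) = iota h b v := by
      rw [iota_apply, ← ev_pairIdx h (b.symm v) hc, tau_ev, ev_pairIdx h _ hc]
    rw [h1, h2]
  · have hc' : (b.symm v).1 % 2 = 1 := by omega
    have h1 : b (odIdx h (pairIdx h (b.symm v))) = v := by rw [od_pairIdx h _ hc']; simp
    have h2 : b (evIdx h (pairIdx h (b.symm v))) = iota h b v := by
      rw [iota_apply, ← od_pairIdx h (b.symm v) hc', tau_od, od_pairIdx h _ hc']
    rw [h1, h2, Set.pair_comm]

/-- If `{u,v}` is the `k`-th `b`-pair, then `v = ι u`. -/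
lemma pair_iota {u v : Fin (2 * h + 2)} {k : Fin (h + 1)}
    (hp : ({u, v} : Set (Fin (2 * h + 2))) = {b (evIdx h k), b (odIdx h k)}) :
    v = iota h b u := by
  rcases Set.pair_eq_pair_iff.mp hp with ⟨h1, h2⟩ | ⟨h1, h2⟩
  · rw [h2, h1, iota_apply]
    simp [tau_ev]
  · rw [h2, h1, iota_apply]
    simp [tau_od]

lemma wfun_ev (k : Fin (h + 1)) : wfun h a b (b (evIdx h k)) = 1 + 2 * (a k : ℤ) := by
  rw [wfun]
  simp only [Equiv.symm_apply_apply]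
  rw [if_pos (by rw [evIdx_val]; omega)]
  have : pairIdx h (evIdx h k) = k := by apply Fin.ext; rw [pairIdx_val, evIdx_val]; omega
  rw [this]; ring

lemma wfun_od (k : Fin (h + 1)) : wfun h a b (b (odIdx h k)) = -(1 + 2 * (a k : ℤ)) := by
  rw [wfun]
  simp only [Equiv.symm_apply_apply]
  rw [if_neg (by rw [odIdx_val]; omega)]
  have : pairIdx h (odIdx h k) = k := by apply Fin.ext; rw [pairIdx_val, odIdx_val]; omega
  rw [this]; ring

lemma iota_bev (k : Fin (h + 1)) : iota h b (b (evIdx h k)) = b (odIdx h k) := by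
  rw [iota_apply]; simp [tau_ev]

lemma iota_bod (k : Fin (h + 1)) : iota h b (b (odIdx h k)) = b (evIdx h k) := by
  rw [iota_apply]; simp [tau_od]

end OneMatching


section OneMatching2

variable (h : ℕ) (a : Fin (h + 1) → ℕ) (b : Equiv.Perm (Fin (2 * h + 2)))

lemma pairIdx_ev (k : Fin (h + 1)) : pairIdx h (evIdx h k) = k := by
  apply Fin.ext; rw [pairIdx_val, evIdx_val]; omega

lemma pairIdx_od (k : Fin (h + 1)) : pairIdx h (odIdx h k) = k := by
  apply Fin.ext; rw [pairIdx_val, odIdx_val]; omega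

lemma stepSign_iota (v : Fin (2 * h + 2)) :
    stepSign h a b v (iota h b v) = wfun h a b v := by
  classical
  rw [stepSign]
  set k₀ := pairIdx h (b.symm v) with hk₀
  rw [Finset.sum_eq_single k₀]
  · by_cases hc : (b.symm v).1 % 2 = 0
    · have h1 : v = b (evIdx h k₀) := by rw [hk₀, ev_pairIdx h _ hc]; simp
      have h2 : iota h b v = b (odIdx h k₀) := by rw [h1, iota_bev]
      rw [if_pos ⟨h1, h2⟩, h1, wfun_ev]
    · have hc' : (b.symm v).1 % 2 = 1 := by omega
      have h1 : v = b (odIdx h k₀) := by rw [hk₀, od_pairIdx h _ hc']; simp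
      have h2 : iota h b v = b (evIdx h k₀) := by rw [h1, iota_bod]
      have hne : ¬ (v = b (evIdx h k₀) ∧ iota h b v = b (odIdx h k₀)) := by
        rintro ⟨hv, -⟩
        have : (b.symm v).1 % 2 = 0 := by
          rw [hv]; simp only [Equiv.symm_apply_apply]; rw [evIdx_val]; omega
        omega
      rw [if_neg hne, if_pos ⟨h1, h2⟩, h1, wfun_od]
  · intro k _ hk
    have hne1 : ¬ (v = b (evIdx h k) ∧ iota h b v = b (odIdx h k)) := by
      rintro ⟨hv, -⟩
      apply hk
      rw [hk₀, hv]
      simp only [Equiv.symm_apply_apply]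
      rw [pairIdx_ev]
    have hne2 : ¬ (v = b (odIdx h k) ∧ iota h b v = b (evIdx h k)) := by
      rintro ⟨hv, -⟩
      apply hk
      rw [hk₀, hv]
      simp only [Equiv.symm_apply_apply]
      rw [pairIdx_od]
    rw [if_neg hne1, if_neg hne2]
  · intro hmem
    exact absurd (Finset.mem_univ k₀) hmem

variable (d : ℕ)

/-- Characterization of membership in `Lsub`. -/
lemma mem_Lsub_iff (x : Fin (2 * h + 2) → ℂ) :
    x ∈ Lsub h d a b ↔
      ∀ v, x v = zeta2d d ^ (wfun h a b v) * x (iota h b v) := by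
  have hbase : x ∈ Lsub h d a b ↔
      ∀ e : Fin (h + 1), x (b (evIdx h e)) = zeta2d d ^ (1 + 2 * a e) * x (b (odIdx h e)) := by
    rw [Lsub, Submodule.mem_iInf]
    apply forall_congr'
    intro e
    rw [LinearMap.mem_ker, LinearMap.sub_apply, LinearMap.smul_apply, LinearMap.proj_apply,
      LinearMap.proj_apply, sub_eq_zero]
    rfl
  rw [hbase]
  constructor
  · intro H v
    by_cases hc : (b.symm v).1 % 2 = 0
    · set k := pairIdx h (b.symm v) with hk
      have h1 : v = b (evIdx h k) := by rw [hk, ev_pairIdx h _ hc]; simp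
      have h2 : iota h b v = b (odIdx h k) := by rw [h1, iota_bev]
      rw [h1, iota_bev, wfun_ev]
      have : zeta2d d ^ ((1 : ℤ) + 2 * (a k : ℤ)) = zeta2d d ^ (1 + 2 * a k) := by
        rw [show ((1 : ℤ) + 2 * (a k : ℤ)) = ((1 + 2 * a k : ℕ) : ℤ) by push_cast; ring,
          zpow_natCast]
      rw [this]
      exact H k
    · have hc' : (b.symm v).1 % 2 = 1 := by omega
      set k := pairIdx h (b.symm v) with hk
      have h1 : v = b (odIdx h k) := by rw [hk, od_pairIdx h _ hc']; simp
      have h2 : iota h b v = b (evIdx h k) := by rw [h1, iota_bod]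
      rw [h1, iota_bod, wfun_od]
      have hz : zeta2d d ^ (1 + 2 * a k) ≠ 0 := pow_ne_zero _ (zeta2d_ne_zero d)
      have hzp : zeta2d d ^ (-((1 : ℤ) + 2 * (a k : ℤ))) = (zeta2d d ^ (1 + 2 * a k))⁻¹ := by
        rw [_root_.zpow_neg, show ((1 : ℤ) + 2 * (a k : ℤ)) = ((1 + 2 * a k : ℕ) : ℤ) by push_cast; ring,
          zpow_natCast]
      rw [hzp, H k]
      field_simp
  · intro H e
    have h2 : iota h b (b (evIdx h e)) = b (odIdx h e) := iota_bev h b e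
    have := H (b (evIdx h e))
    rw [h2, wfun_ev] at this
    rw [this, show ((1 : ℤ) + 2 * (a e : ℤ)) = ((1 + 2 * a e : ℕ) : ℤ) by push_cast; ring,
      zpow_natCast]

end OneMatching2

section TwoMatchings
open scoped Classical

variable (h d : ℕ) (a ac : Fin (h + 1) → ℕ) (b bc : Equiv.Perm (Fin (2 * h + 2)))

/-- One step of the bicycle relation. -/
def brel (u v : Fin (2 * h + 2)) : Prop := v = iota h b u ∨ v = iota h bc u

lemma brel_symm {u v : Fin (2 * h + 2)} (hr : brel h b bc u v) : brel h b bc v u := by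
  rcases hr with hr | hr
  · left; rw [hr, iota_iota]
  · right; rw [hr, iota_iota]

/-- Reachability. -/
def Rel (u v : Fin (2 * h + 2)) : Prop := Relation.ReflTransGen (brel h b bc) u v

lemma Rel.symm {u v : Fin (2 * h + 2)} (hr : Rel h b bc u v) : Rel h b bc v u :=
  by
    haveI : Std.Symm (brel h b bc) := ⟨fun _ _ hh => brel_symm h b bc hh⟩
    exact Std.Symm.symm (r := Relation.ReflTransGen (brel h b bc)) _ _ hr

lemma rel_equiv : Equivalence (Rel h b bc) :=
  ⟨fun _ => Relation.ReflTransGen.refl, Rel.symm h b bc, fun hxy hyz => hxy.trans hyz⟩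

/-- The setoid of bicycle components. -/
def bsetoid : Setoid (Fin (2 * h + 2)) := ⟨Rel h b bc, rel_equiv h b bc⟩

/-- Quotient by bicycle components. -/
def BQ : Type := Quotient (bsetoid h b bc)

def bmk (v : Fin (2 * h + 2)) : BQ h b bc := Quotient.mk (bsetoid h b bc) v

lemma bmk_eq_iff {u v : Fin (2 * h + 2)} : bmk h b bc u = bmk h b bc v ↔ Rel h b bc u v :=
  ⟨Quotient.exact, fun hr => Quotient.sound hr⟩

lemma bmk_iota (v : Fin (2 * h + 2)) : bmk h b bc (iota h b v) = bmk h b bc v :=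
  (bmk_eq_iff h b bc).mpr (Rel.symm h b bc (Relation.ReflTransGen.single (Or.inl rfl)))

lemma bmk_iotac (v : Fin (2 * h + 2)) : bmk h b bc (iota h bc v) = bmk h b bc v :=
  (bmk_eq_iff h b bc).mpr (Rel.symm h b bc (Relation.ReflTransGen.single (Or.inr rfl)))

/-- The intersection submodule. -/
noncomputable def Sol : Submodule ℂ (Fin (2 * h + 2) → ℂ) :=
  Lsub h d a b ⊓ Lsub h d ac bc

lemma mem_Sol_iff (x : Fin (2 * h + 2) → ℂ) :
    x ∈ Sol h d a ac b bc ↔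
      (∀ v, x v = zeta2d d ^ (wfun h a b v) * x (iota h b v)) ∧
      (∀ v, x v = zeta2d d ^ (wfun h ac bc v) * x (iota h bc v)) := by
  rw [Sol, Submodule.mem_inf, mem_Lsub_iff, mem_Lsub_iff]

lemma sol_step_zero {x : Fin (2 * h + 2) → ℂ} (hx : x ∈ Sol h d a ac b bc)
    {u v : Fin (2 * h + 2)} (hr : brel h b bc u v) (hu : x u = 0) : x v = 0 := by
  rw [mem_Sol_iff] at hx
  rcases hr with hr | hr
  · have := hx.1 u
    rw [hu] at this
    rw [hr]
    rcases mul_eq_zero.mp this.symm with hz | hz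
    · exact absurd hz (zpow_ne_zero _ (zeta2d_ne_zero d))
    · exact hz
  · have := hx.2 u
    rw [hu] at this
    rw [hr]
    rcases mul_eq_zero.mp this.symm with hz | hz
    · exact absurd hz (zpow_ne_zero _ (zeta2d_ne_zero d))
    · exact hz

lemma sol_rel_zero {x : Fin (2 * h + 2) → ℂ} (hx : x ∈ Sol h d a ac b bc)
    {u v : Fin (2 * h + 2)} (hr : Rel h b bc u v) (hu : x u = 0) : x v = 0 := by
  induction hr with
  | refl => exact hu
  | tail _ hstep ih => exact sol_step_zero h d a ac b bc hx hstep ih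

lemma sol_rel_ne_zero {x : Fin (2 * h + 2) → ℂ} (hx : x ∈ Sol h d a ac b bc)
    {u v : Fin (2 * h + 2)} (hr : Rel h b bc u v) (hu : x u ≠ 0) : x v ≠ 0 := by
  intro hv
  exact hu (sol_rel_zero h d a ac b bc hx (Rel.symm h b bc hr) hv)

open scoped Classical in
/-- Restriction of a solution to one component. -/
noncomputable def solRestrict (x : Fin (2 * h + 2) → ℂ) (q : BQ h b bc) :
    Fin (2 * h + 2) → ℂ :=
  fun v => if bmk h b bc v = q then x v else 0

lemma solRestrict_mem {x : Fin (2 * h + 2) → ℂ} (hx : x ∈ Sol h d a ac b bc)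
    (q : BQ h b bc) : solRestrict h b bc x q ∈ Sol h d a ac b bc := by
  rw [mem_Sol_iff] at hx ⊢
  constructor
  · intro v
    unfold solRestrict
    rw [bmk_iota]
    by_cases hq : bmk h b bc v = q
    · rw [if_pos hq, if_pos hq]; exact hx.1 v
    · rw [if_neg hq, if_neg hq, mul_zero]
  · intro v
    unfold solRestrict
    rw [bmk_iotac]
    by_cases hq : bmk h b bc v = q
    · rw [if_pos hq, if_pos hq]; exact hx.2 v
    · rw [if_neg hq, if_neg hq, mul_zero]

/-- A component is good if it carries a nonzero solution supported on it. -/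
def GoodQ (q : BQ h b bc) : Prop :=
  ∃ x : Fin (2 * h + 2) → ℂ, x ∈ Sol h d a ac b bc ∧
    (∀ v, bmk h b bc v ≠ q → x v = 0) ∧ x q.out = 1

lemma bmk_out (q : BQ h b bc) : bmk h b bc q.out = q := Quotient.out_eq q

lemma finrank_Sol_eq :
    Module.finrank ℂ (Sol h d a ac b bc) = Nat.card {q : BQ h b bc // GoodQ h d a ac b bc q} := by
  classical
  have hfinQ : Finite (BQ h b bc) := Quotient.finite _
  have hfin : Finite {q : BQ h b bc // GoodQ h d a ac b bc q} := Subtype.finite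
  letI : Fintype {q : BQ h b bc // GoodQ h d a ac b bc q} := Fintype.ofFinite _
  -- the evaluation map
  let Φ : (Sol h d a ac b bc) →ₗ[ℂ] ({q : BQ h b bc // GoodQ h d a ac b bc q} → ℂ) :=
    { toFun := fun x => fun q => x.1 q.1.out
      map_add' := fun x y => rfl
      map_smul' := fun c x => rfl }
  have hinj : Function.Injective Φ := by
    rw [injective_iff_map_eq_zero]
    intro x hΦ
    ext v
    by_contra hv
    have hv' : x.1 v ≠ 0 := hv
    set q : BQ h b bc := bmk h b bc v with hq
    have hrel : Rel h b bc v q.out :=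
      (bmk_eq_iff h b bc).mp (by rw [bmk_out])
    have hout : x.1 q.out ≠ 0 :=
      sol_rel_ne_zero h d a ac b bc x.2 hrel hv'
    have hgood : GoodQ h d a ac b bc q := by
      refine ⟨(x.1 q.out)⁻¹ • solRestrict h b bc x.1 q, ?_, ?_, ?_⟩
      · exact Submodule.smul_mem _ _ (solRestrict_mem h d a ac b bc x.2 q)
      · intro u hu
        simp only [Pi.smul_apply, smul_eq_mul, solRestrict, if_neg hu, mul_zero]
      · simp only [Pi.smul_apply, smul_eq_mul, solRestrict, if_pos (bmk_out h b bc q)]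
        exact inv_mul_cancel₀ hout
    have := congrFun hΦ ⟨q, hgood⟩
    exact hout this
  have hsurj : Function.Surjective Φ := by
    intro f
    -- choose witnesses
    have hch : ∀ q : {q : BQ h b bc // GoodQ h d a ac b bc q},
        ∃ y : Fin (2 * h + 2) → ℂ, y ∈ Sol h d a ac b bc ∧
          (∀ v, bmk h b bc v ≠ q.1 → y v = 0) ∧ y q.1.out = 1 := fun q => q.2
    choose y hySol hySupp hyOut using hch
    refine ⟨⟨∑ q, f q • y q, ?_⟩, ?_⟩
    · exact Submodule.sum_mem _ (fun q _ => Submodule.smul_mem _ _ (hySol q))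
    · ext q
      show (∑ q', f q' • y q') q.1.out = f q
      rw [Finset.sum_apply]
      rw [Finset.sum_eq_single q]
      · simp [hyOut q]
      · intro q' _ hq'
        have hne : bmk h b bc q.1.out ≠ q'.1 := by
          rw [bmk_out]
          intro hc
          exact hq' (Subtype.ext hc.symm)
        simp [hySupp q' _ hne]
      · intro hmem; exact absurd (Finset.mem_univ q) hmem
  have hequiv := LinearEquiv.ofBijective Φ ⟨hinj, hsurj⟩
  rw [hequiv.finrank_eq, Module.finrank_fintype_fun_eq_card, Nat.card_eq_fintype_card]

end TwoMatchings

section BicStruct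

variable (h : ℕ) (b bc : Equiv.Perm (Fin (2 * h + 2)))

def bpred (s : ℕ) (t : Fin (2 * s + 2)) : Fin (2 * s + 2) :=
  ⟨if t.1 = 0 then 2 * s + 1 else t.1 - 1, by split <;> omega⟩

lemma bpred_val (s : ℕ) (t : Fin (2 * s + 2)) :
    (bpred s t).1 = if t.1 = 0 then 2 * s + 1 else t.1 - 1 := rfl

lemma cyc_val (s : ℕ) (t : Fin (2 * s + 2)) : (cyc s t).1 = (t.1 + 1) % (2 * s + 2) := rfl

lemma cyc_val_lt (s : ℕ) (t : Fin (2 * s + 2)) (ht : t.1 < 2 * s + 1) :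
    (cyc s t).1 = t.1 + 1 := by
  rw [cyc_val, Nat.mod_eq_of_lt (by omega)]

lemma cyc_bpred (s : ℕ) (t : Fin (2 * s + 2)) : cyc s (bpred s t) = t := by
  apply Fin.ext
  rw [cyc_val, bpred_val]
  by_cases ht : t.1 = 0
  · rw [if_pos ht, ht]
    show (2 * s + 1 + 1) % (2 * s + 2) = 0
    rw [show 2 * s + 1 + 1 = 2 * s + 2 from rfl, Nat.mod_self]
  · rw [if_neg ht]
    have h1 : t.1 - 1 + 1 = t.1 := by omega
    rw [h1, Nat.mod_eq_of_lt t.isLt]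

lemma bpred_parity_even (s : ℕ) (t : Fin (2 * s + 2)) (ht : t.1 % 2 = 0) :
    (bpred s t).1 % 2 = 1 := by
  rw [bpred_val]
  by_cases h0 : t.1 = 0
  · rw [if_pos h0]; omega
  · rw [if_neg h0]; omega

lemma bpred_parity_odd (s : ℕ) (t : Fin (2 * s + 2)) (ht : t.1 % 2 = 1) :
    (bpred s t).1 % 2 = 0 := by
  rw [bpred_val, if_neg (by omega)]; omega

variable {s : ℕ} {c : Fin (2 * s + 2) → Fin (2 * h + 2)} (hbc : IsBicycle h b bc c)

include hbc

lemma bic_step_even (t : Fin (2 * s + 2)) (ht : t.1 % 2 = 0) :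
    c (cyc s t) = iota h b (c t) := by
  have h2 := hbc.2 t
  rw [if_pos ht] at h2
  obtain ⟨k, hk⟩ := h2
  exact pair_iota h b hk

lemma bic_step_odd (t : Fin (2 * s + 2)) (ht : t.1 % 2 = 1) :
    c (cyc s t) = iota h bc (c t) := by
  have h2 := hbc.2 t
  rw [if_neg (by omega)] at h2
  obtain ⟨k, hk⟩ := h2
  exact pair_iota h bc hk

lemma bic_iota_eq (t : Fin (2 * s + 2)) :
    iota h b (c t) = if t.1 % 2 = 0 then c (cyc s t) else c (bpred s t) := by
  by_cases ht : t.1 % 2 = 0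
  · rw [if_pos ht, bic_step_even h b bc hbc t ht]
  · rw [if_neg ht]
    have hp : (bpred s t).1 % 2 = 0 := bpred_parity_odd s t (by omega)
    have := bic_step_even h b bc hbc (bpred s t) hp
    rw [cyc_bpred] at this
    rw [this, iota_iota]

lemma bic_iotac_eq (t : Fin (2 * s + 2)) :
    iota h bc (c t) = if t.1 % 2 = 1 then c (cyc s t) else c (bpred s t) := by
  by_cases ht : t.1 % 2 = 1
  · rw [if_pos ht, bic_step_odd h b bc hbc t ht]
  · rw [if_neg ht]
    have hp : (bpred s t).1 % 2 = 1 := bpred_parity_even s t (by omega)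
    have := bic_step_odd h b bc hbc (bpred s t) hp
    rw [cyc_bpred] at this
    rw [this, iota_iota]

lemma bic_rel (t : Fin (2 * s + 2)) : Rel h b bc (c 0) (c t) := by
  have aux : ∀ j (hj : j < 2 * s + 2), Rel h b bc (c 0) (c ⟨j, hj⟩) := by
    intro j
    induction j with
    | zero => intro hj; exact Relation.ReflTransGen.refl
    | succ j ih =>
      intro hj
      have hj' : j < 2 * s + 2 := by omega
      have hcyc : cyc s ⟨j, hj'⟩ = ⟨j + 1, hj⟩ := by
        apply Fin.ext
        rw [cyc_val]
        exact Nat.mod_eq_of_lt hj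
      have hv : ((⟨j, hj'⟩ : Fin (2 * s + 2))).1 = j := rfl
      have hstep : brel h b bc (c ⟨j, hj'⟩) (c ⟨j + 1, hj⟩) := by
        rw [← hcyc]
        by_cases hp : j % 2 = 0
        · left; exact bic_step_even h b bc hbc _ (by rw [hv]; exact hp)
        · right; exact bic_step_odd h b bc hbc _ (by rw [hv]; omega)
      exact (ih hj').tail hstep
  have := aux t.1 t.isLt
  simpa using this

lemma bic_range : Set.range c = {v | bmk h b bc v = bmk h b bc (c 0)} := by
  ext v
  constructor
  · rintro ⟨t, rfl⟩
    exact (bmk_eq_iff h b bc).mpr (Rel.symm h b bc (bic_rel h b bc hbc t))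
  · intro hv
    have hrel : Rel h b bc (c 0) v := Rel.symm h b bc ((bmk_eq_iff h b bc).mp hv)
    induction hrel with
    | refl => exact ⟨0, rfl⟩
    | tail hprev hstep ih =>
      rename_i u v'
      obtain ⟨t, rfl⟩ := ih ((bmk_eq_iff h b bc).mpr (Rel.symm h b bc hprev))
      rcases hstep with hs | hs
      · rw [hs, bic_iota_eq h b bc hbc t]
        split
        · exact ⟨_, rfl⟩
        · exact ⟨_, rfl⟩
      · rw [hs, bic_iotac_eq h b bc hbc t]
        split
        · exact ⟨_, rfl⟩
        · exact ⟨_, rfl⟩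

end BicStruct

section Conductor

variable (h d : ℕ) (a ac : Fin (h + 1) → ℕ) (b bc : Equiv.Perm (Fin (2 * h + 2)))

lemma zpow_congr_mod (hd : d ≠ 0) {m n : ℤ} (hmn : (2 * d : ℤ) ∣ (m - n)) :
    zeta2d d ^ m = zeta2d d ^ n := by
  have hprim := zeta2d_isPrimitiveRoot d hd
  have h1 : zeta2d d ^ (m - n) = 1 := by
    rw [hprim.zpow_eq_one_iff_dvd]
    exact_mod_cast hmn
  calc zeta2d d ^ m = zeta2d d ^ (m - n + n) := by ring_nf
    _ = zeta2d d ^ (m - n) * zeta2d d ^ n := zpow_add₀ (zeta2d_ne_zero d) _ _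
    _ = zeta2d d ^ n := by rw [h1, one_mul]

lemma zpow_finset_sum (z : ℂ) (hz : z ≠ 0) {n : ℕ} (f : Fin n → ℤ) :
    z ^ (∑ t, f t) = ∏ t, z ^ f t := by
  classical
  induction (Finset.univ : Finset (Fin n)) using Finset.induction_on with
  | empty => simp
  | insert _ _ hnotmem ih =>
    rename_i t s'
    rw [Finset.sum_insert hnotmem, Finset.prod_insert hnotmem, zpow_add₀ hz, ih]

variable {s : ℕ} (c : Fin (2 * s + 2) → Fin (2 * h + 2))

/-- The step exponent of a bicycle at position `t`. -/
def stepExp (t : Fin (2 * s + 2)) : ℤ :=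
  if t.1 % 2 = 0 then wfun h a b (c t) else wfun h ac bc (c t)

variable {c}
variable (hbc : IsBicycle h b bc c)

include hbc

lemma cond_eq : bicConductor h a ac b bc c = ∑ t, stepExp h a ac b bc c t := by
  rw [bicConductor]
  apply Finset.sum_congr rfl
  intro t _
  unfold stepExp
  by_cases ht : t.1 % 2 = 0
  · rw [if_pos ht, if_pos ht, bic_step_even h b bc hbc t ht, stepSign_iota]
  · rw [if_neg ht, if_neg ht, bic_step_odd h b bc hbc t (by omega), stepSign_iota]

/-- Conductor divisibility from a solution not vanishing on the bicycle. -/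
lemma dvd_conductor_of_sol (hd : d ≠ 0) {x : Fin (2 * h + 2) → ℂ}
    (hx : x ∈ Sol h d a ac b bc) (hx0 : x (c 0) ≠ 0) :
    (2 * d : ℤ) ∣ bicConductor h a ac b bc c := by
  classical
  have hmem := (mem_Sol_iff h d a ac b bc x).mp hx
  -- each step equation
  have hstep : ∀ t : Fin (2 * s + 2),
      x (c t) = zeta2d d ^ (stepExp h a ac b bc c t) * x (c (cyc s t)) := by
    intro t
    unfold stepExp
    by_cases ht : t.1 % 2 = 0
    · rw [if_pos ht, bic_step_even h b bc hbc t ht]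
      exact hmem.1 (c t)
    · rw [if_neg ht, bic_step_odd h b bc hbc t (by omega)]
      exact hmem.2 (c t)
  have hne : ∀ t : Fin (2 * s + 2), x (c t) ≠ 0 := fun t =>
    sol_rel_ne_zero h d a ac b bc hx (bic_rel h b bc hbc t) hx0
  -- product around the cycle
  have hprod : ∏ t, x (c t)
      = (∏ t, zeta2d d ^ (stepExp h a ac b bc c t)) * ∏ t, x (c (cyc s t)) := by
    rw [← Finset.prod_mul_distrib]
    exact Finset.prod_congr rfl (fun t _ => hstep t)
  have hbij : Function.Bijective (cyc s) := by
    rw [Fintype.bijective_iff_surjective_and_card]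
    exact ⟨fun t => ⟨bpred s t, cyc_bpred s t⟩, rfl⟩
  have hcycprod : ∏ t, x (c (cyc s t)) = ∏ t, x (c t) := hbij.prod_comp (fun t => x (c t))
  rw [hcycprod] at hprod
  have hPne : (∏ t, x (c t)) ≠ 0 := Finset.prod_ne_zero_iff.mpr (fun t _ => hne t)
  have hone : (∏ t, zeta2d d ^ (stepExp h a ac b bc c t)) = 1 := by
    apply mul_right_cancel₀ hPne
    rw [one_mul, ← hprod]
  rw [← zpow_finset_sum _ (zeta2d_ne_zero d)] at hone
  have hdvd := (zeta2d_isPrimitiveRoot d hd).zpow_eq_one_iff_dvd _ |>.mp hone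
  rw [cond_eq h a ac b bc hbc]
  exact_mod_cast hdvd

end Conductor

section Construction
open scoped Classical

variable (h d : ℕ) (a ac : Fin (h + 1) → ℕ) (b bc : Equiv.Perm (Fin (2 * h + 2)))
variable {s : ℕ} (c : Fin (2 * s + 2) → Fin (2 * h + 2))

def EEfun : ℕ → ℤ := fun j =>
  if hj : j < 2 * s + 2 then stepExp h a ac b bc c ⟨j, hj⟩ else 0

def phiE : ℕ → ℤ := fun n => - ∑ j ∈ Finset.range n, EEfun h a ac b bc c j

lemma EEfun_eq (t : Fin (2 * s + 2)) :
    EEfun h a ac b bc c t.1 = stepExp h a ac b bc c t := by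
  unfold EEfun
  rw [dif_pos t.isLt]

lemma phiE_zero : phiE h a ac b bc c 0 = 0 := by simp [phiE]

lemma phiE_succ (n : ℕ) :
    phiE h a ac b bc c (n + 1) = phiE h a ac b bc c n - EEfun h a ac b bc c n := by
  unfold phiE
  rw [Finset.sum_range_succ]
  ring

variable {c}
variable (hbc : IsBicycle h b bc c)
include hbc

lemma phiE_total : phiE h a ac b bc c (2 * s + 2) = - bicConductor h a ac b bc c := by
  unfold phiE
  rw [cond_eq h a ac b bc hbc, neg_inj]
  rw [← Fin.sum_univ_eq_sum_range (fun j => EEfun h a ac b bc c j) (2 * s + 2)]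
  exact Finset.sum_congr rfl (fun t _ => EEfun_eq h a ac b bc c t)

lemma phiE_cyc (hdvd : (2 * d : ℤ) ∣ bicConductor h a ac b bc c) (t : Fin (2 * s + 2)) :
    (2 * d : ℤ) ∣ (phiE h a ac b bc c t.1
      - (stepExp h a ac b bc c t + phiE h a ac b bc c (cyc s t).1)) := by
  by_cases ht : t.1 < 2 * s + 1
  · rw [cyc_val_lt s t ht, phiE_succ, EEfun_eq]
    have : phiE h a ac b bc c t.1
        - (stepExp h a ac b bc c t
          + (phiE h a ac b bc c t.1 - stepExp h a ac b bc c t)) = 0 := by ring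
    rw [this]
    exact dvd_zero _
  · have ht' : t.1 = 2 * s + 1 := by have := t.isLt; omega
    have hcyc0 : (cyc s t).1 = 0 := by
      rw [cyc_val, ht']
      rw [show 2 * s + 1 + 1 = 2 * s + 2 from rfl, Nat.mod_self]
    rw [hcyc0, phiE_zero]
    have hEE : stepExp h a ac b bc c t = EEfun h a ac b bc c (2 * s + 1) := by
      rw [← ht', EEfun_eq]
    have hkey : phiE h a ac b bc c t.1 - (stepExp h a ac b bc c t + 0)
        = phiE h a ac b bc c (2 * s + 2) := by
      rw [phiE_succ, ht', hEE]; ring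
    rw [hkey, phiE_total h a ac b bc hbc]
    exact dvd_neg.mpr hdvd

/-- Explicit nonzero solution supported on a new bicycle. -/
lemma sol_of_bicycle (hd : d ≠ 0) (hdvd : (2 * d : ℤ) ∣ bicConductor h a ac b bc c) :
    ∃ x : Fin (2 * h + 2) → ℂ, x ∈ Sol h d a ac b bc ∧ x (c 0) = 1 ∧
      (∀ v, v ∉ Set.range c → x v = 0) := by
  classical
  set x : Fin (2 * h + 2) → ℂ :=
    fun v => ∑ t, if c t = v then zeta2d d ^ (phiE h a ac b bc c t.1) else 0 with hx
  have x_app : ∀ t, x (c t) = zeta2d d ^ (phiE h a ac b bc c t.1) := by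
    intro t
    simp only [hx]
    rw [Finset.sum_eq_single t]
    · rw [if_pos rfl]
    · intro t' _ ht'
      rw [if_neg (fun hc => ht' (hbc.1 hc))]
    · intro hmem; exact absurd (Finset.mem_univ t) hmem
  have x_out : ∀ v, v ∉ Set.range c → x v = 0 := by
    intro v hv
    simp only [hx]
    apply Finset.sum_eq_zero
    intro t _
    rw [if_neg (fun hc => hv ⟨t, hc⟩)]
  have key1 : ∀ t : Fin (2 * s + 2), t.1 % 2 = 0 →
      wfun h a b (c t) = stepExp h a ac b bc c t := by
    intro t ht; unfold stepExp; rw [if_pos ht]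
  have key2 : ∀ t : Fin (2 * s + 2), t.1 % 2 = 1 →
      wfun h ac bc (c t) = stepExp h a ac b bc c t := by
    intro t ht; unfold stepExp; rw [if_neg (by omega)]
  refine ⟨x, ?_, ?_, x_out⟩
  · rw [mem_Sol_iff]
    constructor
    · intro v
      by_cases hv : v ∈ Set.range c
      · obtain ⟨t, rfl⟩ := hv
        rw [bic_iota_eq h b bc hbc t]
        by_cases ht : t.1 % 2 = 0
        · rw [if_pos ht, x_app, x_app, ← zpow_add₀ (zeta2d_ne_zero d)]
          apply zpow_congr_mod d hd
          rw [key1 t ht]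
          exact phiE_cyc h d a ac b bc hbc hdvd t
        · rw [if_neg ht, x_app, x_app, ← zpow_add₀ (zeta2d_ne_zero d)]
          apply zpow_congr_mod d hd
          have hp0 : (bpred s t).1 % 2 = 0 := bpred_parity_odd s t (by omega)
          have hiota : iota h b (c (bpred s t)) = c t := by
            rw [bic_iota_eq h b bc hbc (bpred s t), if_pos hp0, cyc_bpred]
          have hw : wfun h a b (c t) = - stepExp h a ac b bc c (bpred s t) := by
            rw [← hiota, wfun_iota, key1 (bpred s t) hp0]
          have h2 := phiE_cyc h d a ac b bc hbc hdvd (bpred s t)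
          rw [cyc_bpred] at h2
          have h4 : (2 * d : ℤ) ∣ _ := dvd_neg.mpr h2
          convert h4 using 1
          rw [hw]
          ring
      · have hnot : iota h b v ∉ Set.range c := by
          rintro ⟨t, htv⟩
          apply hv
          have : v = iota h b (c t) := by rw [htv, iota_iota]
          rw [this, bic_iota_eq h b bc hbc t]
          split
          · exact ⟨_, rfl⟩
          · exact ⟨_, rfl⟩
        rw [x_out v hv, x_out _ hnot, mul_zero]
    · intro v
      by_cases hv : v ∈ Set.range c
      · obtain ⟨t, rfl⟩ := hv
        rw [bic_iotac_eq h b bc hbc t]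
        by_cases ht : t.1 % 2 = 1
        · rw [if_pos ht, x_app, x_app, ← zpow_add₀ (zeta2d_ne_zero d)]
          apply zpow_congr_mod d hd
          rw [key2 t ht]
          exact phiE_cyc h d a ac b bc hbc hdvd t
        · rw [if_neg ht, x_app, x_app, ← zpow_add₀ (zeta2d_ne_zero d)]
          apply zpow_congr_mod d hd
          have hp1 : (bpred s t).1 % 2 = 1 := bpred_parity_even s t (by omega)
          have hiota : iota h bc (c (bpred s t)) = c t := by
            rw [bic_iotac_eq h b bc hbc (bpred s t), if_pos hp1, cyc_bpred]
          have hw : wfun h ac bc (c t) = - stepExp h a ac b bc c (bpred s t) := by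
            rw [← hiota, wfun_iota, key2 (bpred s t) hp1]
          have h2 := phiE_cyc h d a ac b bc hbc hdvd (bpred s t)
          rw [cyc_bpred] at h2
          have h4 : (2 * d : ℤ) ∣ _ := dvd_neg.mpr h2
          convert h4 using 1
          rw [hw]
          ring
      · have hnot : iota h bc v ∉ Set.range c := by
          rintro ⟨t, htv⟩
          apply hv
          have : v = iota h bc (c t) := by rw [htv, iota_iota]
          rw [this, bic_iotac_eq h b bc hbc t]
          split
          · exact ⟨_, rfl⟩
          · exact ⟨_, rfl⟩
        rw [x_out v hv, x_out _ hnot, mul_zero]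
  · have h0 : ((0 : Fin (2 * s + 2))).1 = 0 := rfl
    rw [x_app 0, h0, phiE_zero, zpow_zero]

end Construction

section SigmaConstruction

variable (h : ℕ) (b bc : Equiv.Perm (Fin (2 * h + 2)))

/-- The rotation permutation. -/
def sigmaP : Equiv.Perm (Fin (2 * h + 2)) := iota h bc * iota h b

lemma sigmaP_apply (v : Fin (2 * h + 2)) : sigmaP h b bc v = iota h bc (iota h b v) := rfl

lemma iota_mul_self : iota h b * iota h b = 1 := Equiv.ext (fun v => iota_iota h b v)

lemma iota_inv : (iota h b)⁻¹ = iota h b :=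
  inv_eq_of_mul_eq_one_right (iota_mul_self h b)

lemma sigma_conj : iota h b * sigmaP h b bc * iota h b = (sigmaP h b bc)⁻¹ := by
  rw [sigmaP, _root_.mul_inv_rev, iota_inv, iota_inv]
  rw [show iota h b * (iota h bc * iota h b) * iota h b
      = iota h b * iota h bc * (iota h b * iota h b) by group]
  rw [iota_mul_self, mul_one]

lemma sigma_conj_zpow (m : ℤ) :
    iota h b * (sigmaP h b bc) ^ m * iota h b = (sigmaP h b bc) ^ (-m) := by
  have h1 := map_zpow (MulAut.conj (iota h b)) (sigmaP h b bc) m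
  have h2 : (MulAut.conj (iota h b)) (sigmaP h b bc) = (sigmaP h b bc)⁻¹ := by
    rw [MulAut.conj_apply, iota_inv]
    exact sigma_conj h b bc
  rw [h2, _root_.inv_zpow, ← _root_.zpow_neg] at h1
  rw [← h1, MulAut.conj_apply, iota_inv]

lemma iota_sigma_zpow (m : ℤ) (v : Fin (2 * h + 2)) :
    iota h b ((sigmaP h b bc ^ m) v) = (sigmaP h b bc ^ (-m)) (iota h b v) := by
  have := congrArg (fun e : Equiv.Perm (Fin (2 * h + 2)) => e (iota h b v))
    (sigma_conj_zpow h b bc m)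
  simp only [Equiv.Perm.mul_apply] at this
  rw [iota_iota] at this
  exact this

lemma iotac_eq_sigma_iota (v : Fin (2 * h + 2)) :
    iota h bc v = sigmaP h b bc (iota h b v) := by
  rw [sigmaP_apply, iota_iota]

lemma sigma_zpow_comp (e f : ℤ) (v : Fin (2 * h + 2)) :
    (sigmaP h b bc ^ e) ((sigmaP h b bc ^ f) v) = (sigmaP h b bc ^ (e + f)) v := by
  rw [_root_.zpow_add]
  rfl

variable (u₀ : Fin (2 * h + 2))

lemma exists_period : ∃ m : ℕ, 0 < m ∧ (sigmaP h b bc ^ m) u₀ = u₀ :=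
  ⟨orderOf (sigmaP h b bc), orderOf_pos _, by rw [pow_orderOf_eq_one]; rfl⟩

/-- Minimal period of `u₀` under `σ`. -/
noncomputable def mper : ℕ := Nat.find (exists_period h b bc u₀)

lemma mper_pos : 0 < mper h b bc u₀ := (Nat.find_spec (exists_period h b bc u₀)).1

lemma mper_fix : (sigmaP h b bc ^ mper h b bc u₀) u₀ = u₀ :=
  (Nat.find_spec (exists_period h b bc u₀)).2

lemma mper_min {k : ℕ} (hk : 0 < k) (hk2 : k < mper h b bc u₀) :
    (sigmaP h b bc ^ k) u₀ ≠ u₀ := by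
  intro hc
  exact Nat.find_min (exists_period h b bc u₀) hk2 ⟨hk, hc⟩

lemma fix_zpow (π : Equiv.Perm (Fin (2 * h + 2))) (hfix : π u₀ = u₀) :
    ∀ e : ℤ, (π ^ e) u₀ = u₀ := by
  have hinv : π⁻¹ u₀ = u₀ := by
    conv_lhs => rw [← hfix]
    simp
  intro e
  induction e using Int.induction_on with
  | zero => simp
  | succ k ih =>
    rw [_root_.zpow_add_one, Equiv.Perm.mul_apply, hfix]
    exact ih
  | pred k ih =>
    rw [_root_.zpow_sub_one, Equiv.Perm.mul_apply, hinv]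
    exact ih

lemma zpow_fix_iff (e : ℤ) :
    (sigmaP h b bc ^ e) u₀ = u₀ ↔ (mper h b bc u₀ : ℤ) ∣ e := by
  constructor
  · intro hfix
    by_contra hnd
    set m := mper h b bc u₀ with hm
    set r := e % (m : ℤ) with hr
    have hmpos : (0 : ℤ) < (m : ℤ) := by exact_mod_cast mper_pos h b bc u₀
    have hr0 : 0 ≤ r := Int.emod_nonneg e (by omega)
    have hrlt : r < m := Int.emod_lt_of_pos e hmpos
    have hrne : r ≠ 0 := by
      intro hc
      exact hnd (Int.dvd_of_emod_eq_zero (by rw [← hr]; exact hc))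
    have hqdvd : (m : ℤ) ∣ (e - r) := by
      rw [hr]
      exact Int.dvd_self_sub_of_emod_eq rfl
    obtain ⟨t, ht⟩ := hqdvd
    have hfix2 : (sigmaP h b bc ^ ((m : ℤ) * t)) u₀ = u₀ := by
      rw [_root_.zpow_mul, _root_.zpow_natCast]
      exact fix_zpow h u₀ _ (mper_fix h b bc u₀) t
    have : (sigmaP h b bc ^ r) u₀ = u₀ := by
      have he : e = r + (m : ℤ) * t := by omega
      rw [he] at hfix
      rw [← sigma_zpow_comp h b bc r ((m:ℤ)*t) u₀] at hfix
      rw [hfix2] at hfix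
      exact hfix
    have hnat : (sigmaP h b bc ^ (r.toNat)) u₀ = u₀ := by
      rw [← _root_.zpow_natCast, Int.toNat_of_nonneg hr0]
      exact this
    exact mper_min h b bc u₀ (by omega) (by omega) hnat
  · rintro ⟨t, rfl⟩
    rw [_root_.zpow_mul, _root_.zpow_natCast]
    exact fix_zpow h u₀ _ (mper_fix h b bc u₀) t

lemma zpow_eq_iff (e f : ℤ) :
    (sigmaP h b bc ^ e) u₀ = (sigmaP h b bc ^ f) u₀ ↔ (mper h b bc u₀ : ℤ) ∣ (e - f) := by
  rw [← zpow_fix_iff h b bc u₀ (e - f)]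
  constructor
  · intro heq
    have := congrArg (fun v => (sigmaP h b bc ^ (-f)) v) heq
    simp only [sigma_zpow_comp] at this
    rw [show -f + e = e - f by ring, show -f + f = 0 by ring] at this
    simpa using this
  · intro heq
    have := congrArg (fun v => (sigmaP h b bc ^ f) v) heq
    simp only [sigma_zpow_comp] at this
    rw [show f + (e - f) = e by ring] at this
    simpa using this

lemma no_fold (e : ℤ) : iota h b u₀ ≠ (sigmaP h b bc ^ e) u₀ := by
  intro heq
  have h1 : ∀ f : ℤ, iota h b ((sigmaP h b bc ^ f) u₀) = (sigmaP h b bc ^ (e - f)) u₀ := by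
    intro f
    rw [iota_sigma_zpow, heq, sigma_zpow_comp]
    rw [show -f + e = e - f by ring]
  rcases Int.even_or_odd e with ⟨k, hk⟩ | ⟨k, hk⟩
  · have := h1 k
    rw [hk, show k + k - k = k by ring] at this
    exact iota_ne h b _ this
  · have h2 : iota h bc ((sigmaP h b bc ^ (k + 1)) u₀) = (sigmaP h b bc ^ (k + 1)) u₀ := by
      rw [iotac_eq_sigma_iota h b bc, h1 (k + 1)]
      rw [show sigmaP h b bc ((sigmaP h b bc ^ (e - (k+1))) u₀)
          = (sigmaP h b bc ^ (1 : ℤ)) ((sigmaP h b bc ^ (e - (k+1))) u₀) by rw [_root_.zpow_one]]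
      rw [sigma_zpow_comp]
      congr 1
      rw [hk]
      ring
    exact iota_ne h bc _ h2

end SigmaConstruction

section BuildBicycle
open scoped Classical

variable (h : ℕ) (b bc : Equiv.Perm (Fin (2 * h + 2)))

/-- There is a bicycle through every vertex. -/
lemma exists_bicycle_through (u₀ : Fin (2 * h + 2)) :
    ∃ (s : ℕ) (c : Fin (2 * s + 2) → Fin (2 * h + 2)),
      IsBicycle h b bc c ∧ c 0 = u₀ := by
  set m := mper h b bc u₀ with hm
  have hm1 : 1 ≤ m := mper_pos h b bc u₀
  set s := m - 1 with hs
  have hms : 2 * s + 2 = 2 * m := by omega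
  set c : Fin (2 * s + 2) → Fin (2 * h + 2) :=
    fun t => if t.1 % 2 = 0 then (sigmaP h b bc ^ ((t.1 / 2 : ℕ) : ℤ)) u₀
      else iota h b ((sigmaP h b bc ^ ((t.1 / 2 : ℕ) : ℤ)) u₀) with hc
  have c_even : ∀ t : Fin (2 * s + 2), t.1 % 2 = 0 →
      c t = (sigmaP h b bc ^ ((t.1 / 2 : ℕ) : ℤ)) u₀ := by
    intro t ht; simp only [hc]; rw [if_pos ht]
  have c_odd : ∀ t : Fin (2 * s + 2), t.1 % 2 = 1 →
      c t = iota h b ((sigmaP h b bc ^ ((t.1 / 2 : ℕ) : ℤ)) u₀) := by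
    intro t ht; simp only [hc]; rw [if_neg (by omega)]
  have half_lt : ∀ t : Fin (2 * s + 2), t.1 / 2 < m := by
    intro t; have := t.isLt; omega
  -- injectivity
  have hinj : Function.Injective c := by
    intro t t' heq
    have key_ee : ∀ (i j : ℕ), i < m → j < m →
        (sigmaP h b bc ^ (i : ℤ)) u₀ = (sigmaP h b bc ^ (j : ℤ)) u₀ → i = j := by
      intro i j hi hj hij
      have hdvd := (zpow_eq_iff h b bc u₀ (i : ℤ) (j : ℤ)).mp hij
      rw [← hm] at hdvd
      have := Int.eq_zero_of_abs_lt_dvd hdvd (by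
        rw [abs_lt]
        constructor <;> [skip; skip] <;> push_cast <;> omega)
      omega
    have key_mixed : ∀ (i j : ℕ),
        (sigmaP h b bc ^ (i : ℤ)) u₀ ≠ iota h b ((sigmaP h b bc ^ (j : ℤ)) u₀) := by
      intro i j hcontra
      rw [iota_sigma_zpow] at hcontra
      have := congrArg (fun v => (sigmaP h b bc ^ (j : ℤ)) v) hcontra
      simp only [sigma_zpow_comp] at this
      rw [show (j : ℤ) + -(j : ℤ) = 0 by ring] at this
      simp only [_root_.zpow_zero] at this
      simp only [Equiv.Perm.one_apply] at this
      exact no_fold h b bc u₀ ((j : ℤ) + (i : ℤ)) this.symm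
    by_cases ht : t.1 % 2 = 0 <;> by_cases ht' : t'.1 % 2 = 0
    · rw [c_even t ht, c_even t' ht'] at heq
      have := key_ee _ _ (half_lt t) (half_lt t') heq
      apply Fin.ext; omega
    · rw [c_even t ht, c_odd t' (by omega)] at heq
      exact absurd heq (key_mixed _ _)
    · rw [c_odd t (by omega), c_even t' ht'] at heq
      exact absurd heq.symm (key_mixed _ _)
    · rw [c_odd t (by omega), c_odd t' (by omega)] at heq
      have heq2 := (iota h b).injective heq
      have := key_ee _ _ (half_lt t) (half_lt t') heq2
      apply Fin.ext; omega
  -- the step structure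
  have step_even : ∀ t : Fin (2 * s + 2), t.1 % 2 = 0 →
      c (cyc s t) = iota h b (c t) := by
    intro t ht
    have htlt : t.1 < 2 * s + 1 := by have := t.isLt; omega
    have hcv : (cyc s t).1 = t.1 + 1 := cyc_val_lt s t htlt
    have hodd : (cyc s t).1 % 2 = 1 := by omega
    rw [c_odd _ hodd, c_even t ht, hcv]
    have : (t.1 + 1) / 2 = t.1 / 2 := by omega
    rw [this]
  have step_odd : ∀ t : Fin (2 * s + 2), t.1 % 2 = 1 →
      c (cyc s t) = iota h bc (c t) := by
    intro t ht
    have hιc : iota h bc (c t) = (sigmaP h b bc ^ ((t.1 / 2 : ℕ) + 1 : ℤ)) u₀ := by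
      rw [c_odd t ht, iotac_eq_sigma_iota h b bc, iota_iota]
      rw [show sigmaP h b bc ((sigmaP h b bc ^ ((t.1 / 2 : ℕ) : ℤ)) u₀)
          = (sigmaP h b bc ^ (1 : ℤ)) ((sigmaP h b bc ^ ((t.1 / 2 : ℕ) : ℤ)) u₀) by rw [_root_.zpow_one]]
      rw [sigma_zpow_comp]
      congr 1
      ring
    by_cases htop : t.1 < 2 * s + 1
    · have hcv : (cyc s t).1 = t.1 + 1 := cyc_val_lt s t htop
      have hev : (cyc s t).1 % 2 = 0 := by omega
      rw [c_even _ hev, hιc, hcv]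
      congr 1
      have : (t.1 + 1) / 2 = t.1 / 2 + 1 := by omega
      rw [this]
      push_cast
      ring
    · have ht' : t.1 = 2 * s + 1 := by have := t.isLt; omega
      have hcv : (cyc s t).1 = 0 := by
        rw [cyc_val, ht', show 2 * s + 1 + 1 = 2 * s + 2 from rfl, Nat.mod_self]
      have hev : (cyc s t).1 % 2 = 0 := by omega
      rw [c_even _ hev, hcv, hιc]
      have hhalf : t.1 / 2 + 1 = m := by omega
      have hcast : ((t.1 / 2 : ℕ) + 1 : ℤ) = (m : ℤ) := by exact_mod_cast hhalf
      have h00 : ((0 : Fin (2 * s + 2)) : ℕ) = 0 := by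
        show 0 % (2 * s + 2) = 0
        exact Nat.zero_mod _
      rw [hcast]
      have hfix : (sigmaP h b bc ^ ((m : ℕ) : ℤ)) u₀ = u₀ := by
        rw [_root_.zpow_natCast]; exact mper_fix h b bc u₀
      rw [hfix]
      norm_num
  refine ⟨s, c, ⟨hinj, ?_⟩, ?_⟩
  · intro t
    by_cases ht : t.1 % 2 = 0
    · rw [if_pos ht, step_even t ht]
      exact pair_ex h b (c t)
    · rw [if_neg ht, step_odd t (by omega)]
      exact pair_ex h bc (c t)
  · have h00 : ((0 : Fin (2 * s + 2)) : ℕ) = 0 := by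
      show 0 % (2 * s + 2) = 0
      exact Nat.zero_mod _
    rw [c_even 0 (by omega), h00]
    norm_num

end BuildBicycle

section Glue

variable (h d : ℕ) (a ac : Fin (h + 1) → ℕ) (b bc : Equiv.Perm (Fin (2 * h + 2)))

lemma goodQ_of_ne_zero {x : Fin (2 * h + 2) → ℂ} (hx : x ∈ Sol h d a ac b bc)
    {v : Fin (2 * h + 2)} (hv : x v ≠ 0) : GoodQ h d a ac b bc (bmk h b bc v) := by
  set q : BQ h b bc := bmk h b bc v with hq
  have hrel : Rel h b bc v q.out :=
    (bmk_eq_iff h b bc).mp (by rw [bmk_out])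
  have hout : x q.out ≠ 0 := sol_rel_ne_zero h d a ac b bc hx hrel hv
  refine ⟨(x q.out)⁻¹ • solRestrict h b bc x q, ?_, ?_, ?_⟩
  · exact Submodule.smul_mem _ _ (solRestrict_mem h d a ac b bc hx q)
  · intro u hu
    simp only [Pi.smul_apply, smul_eq_mul, solRestrict, if_neg hu, mul_zero]
  · simp only [Pi.smul_apply, smul_eq_mul, solRestrict, if_pos (bmk_out h b bc q)]
    exact inv_mul_cancel₀ hout

lemma main_count (hd : d ≠ 0) :
    Module.finrank ℂ (Sol h d a ac b bc)
      = Set.ncard {S : Set (Fin (2 * h + 2)) |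
          ∃ (s : ℕ) (c : Fin (2 * s + 2) → Fin (2 * h + 2)),
            IsBicycle h b bc c ∧ Set.range c = S ∧
            ((2 * d : ℤ) ∣ bicConductor h a ac b bc c)} := by
  classical
  rw [finrank_Sol_eq h d a ac b bc]
  set f : BQ h b bc → Set (Fin (2 * h + 2)) := fun q => {v | bmk h b bc v = q} with hf
  have hfin : Function.Injective f := by
    intro q q' hqq
    have h1 : q.out ∈ f q := bmk_out h b bc q
    rw [hqq] at h1
    have h2 : bmk h b bc q.out = q' := h1
    rw [bmk_out] at h2
    exact h2
  have hBeq : {S : Set (Fin (2 * h + 2)) |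
      ∃ (s : ℕ) (c : Fin (2 * s + 2) → Fin (2 * h + 2)),
        IsBicycle h b bc c ∧ Set.range c = S ∧
        ((2 * d : ℤ) ∣ bicConductor h a ac b bc c)}
      = f '' {q : BQ h b bc | GoodQ h d a ac b bc q} := by
    ext S
    constructor
    · rintro ⟨s, c, hbc, rfl, hdvd⟩
      obtain ⟨x, hxSol, hx0, -⟩ := sol_of_bicycle h d a ac b bc hbc hd hdvd
      refine ⟨bmk h b bc (c 0), ?_, ?_⟩
      · exact goodQ_of_ne_zero h d a ac b bc hxSol (by rw [hx0]; exact one_ne_zero)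
      · rw [hf]
        exact (bic_range h b bc hbc).symm
    · rintro ⟨q, hq, rfl⟩
      obtain ⟨s, c, hbc, hc0⟩ := exists_bicycle_through h b bc q.out
      obtain ⟨x, hxSol, hxsupp, hxout⟩ := hq
      have hx0 : x (c 0) ≠ 0 := by rw [hc0, hxout]; exact one_ne_zero
      refine ⟨s, c, hbc, ?_, ?_⟩
      · rw [bic_range h b bc hbc, hc0, bmk_out]
      · exact dvd_conductor_of_sol h d a ac b bc hbc hd hxSol hx0
  rw [hBeq, Set.ncard_image_of_injective _ hfin, ← Nat.card_coe_set_eq]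
  exact Nat.card_congr (Equiv.subtypeEquivRight (fun q => Iff.rfl)) |>.symm

end Glue

end FermatBic

/-- The dimension of `L_{a,b} ∩ L_{ǎ,b̌}` equals the number of new bicycles attached to
`((a,b),(ǎ,b̌))`, i.e. the number of supports of bicycles whose bicConductor is divisible
by `2d`. -/
theorem finrank_inter_eq_card_new_bicycles (h d : ℕ) (hh : 1 ≤ h) (hd : 3 ≤ d)
    (a ac : Fin (h + 1) → Fin d) (b bc : Equiv.Perm (Fin (2 * h + 2))) :
    Module.finrank ℂ
        ↥(Lsub h d (fun e => (a e : ℕ)) b ⊓ Lsub h d (fun e => (ac e : ℕ)) bc)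
      = Set.ncard {S : Set (Fin (2 * h + 2)) |
          ∃ (s : ℕ) (c : Fin (2 * s + 2) → Fin (2 * h + 2)),
            IsBicycle h b bc c ∧ Set.range c = S ∧
            ((2 * d : ℤ) ∣ bicConductor h (fun e => (a e : ℕ)) (fun e => (ac e : ℕ)) b bc c)} := by
  
  have hd0 : d ≠ 0 := by omega
  exact FermatBic.main_count h d (fun e => (a e : ℕ)) (fun e => (ac e : ℕ)) b bc hd0
end
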